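/- Liouville-type theorem: let (f_ε) be a net of entire functions f_ε : ℂ → ℂ and M = [M_ε] ∈ ℝ~ with M > 0 such that for every N ∈ ℕ one has sup{|f_ε(w)| : |w| ≤ ρ_ε^(−N)} ≤ M_ε for ε small. Put a_{nε} := f_ε^(n)(0)/n!. Then (a_{nε})_{n,ε} is weakly ρ-moderate with class (a_n)_c ∈ ℂ~_c, a_N := [a_{N_ε,ε}] = 0 in ℂ~ for every N ∈ ℕ~ with N ≥ 1, and for every z ∈ σ((a_n)_c, 0) the hyperseries Σ_{n∈ℕ~} a_n z^n converges to the constant [f_ε(0)] ∈ ℂ~. In particular, a bounded generalized entire function, i.e. f : ℂ~ → ℂ~ with f(z) = Σ_{n∈ℕ~} a_n z^n for all z ∈ ℂ~ where σ((a_n)_c, 0) = ℂ~, is constant. -/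

import Mathlib

open Filter

noncomputable section

/-- `P ε` holds for all ε small. -/
def EvS (P : ℝ → Prop) : Prop := ∃ ε₀ : ℝ, 0 < ε₀ ∧ ε₀ ≤ 1 ∧ ∀ ε : ℝ, 0 < ε → ε ≤ ε₀ → P ε

theorem EvS.mono {P Q : ℝ → Prop} (h : EvS P) (h2 : ∀ ε, 0 < ε → ε ≤ 1 → P ε → Q ε) : EvS Q := by
  obtain ⟨e, he, he1, hP⟩ := h
  exact ⟨e, he, he1, fun ε hε hεe => h2 ε hε (hεe.trans he1) (hP ε hε hεe)⟩

theorem EvS.and {P Q : ℝ → Prop} (h : EvS P) (h' : EvS Q) : EvS fun ε => P ε ∧ Q ε := by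
  obtain ⟨e, he, he1, hP⟩ := h
  obtain ⟨e', he', he1', hQ⟩ := h'
  exact ⟨min e e', lt_min he he', le_trans (min_le_left _ _) he1, fun ε hε hm =>
    ⟨hP ε hε (le_trans hm (min_le_left _ _)), hQ ε hε (le_trans hm (min_le_right _ _))⟩⟩

/-- A gauge: a nonincreasing net of reals in (0,1] tending to 0. -/
structure Gauge where
  ρ : ℝ → ℝ
  pos : ∀ ε : ℝ, 0 < ε → ε ≤ 1 → 0 < ρ ε
  le_one : ∀ ε : ℝ, 0 < ε → ε ≤ 1 → ρ ε ≤ 1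
  anti : ∀ ε ε' : ℝ, 0 < ε → ε ≤ ε' → ε' ≤ 1 → ρ ε' ≤ ρ ε
  to_zero : Tendsto ρ (nhdsWithin 0 (Set.Ioi 0)) (nhds 0)

namespace Gauge

theorem evs_le (g : Gauge) {δ : ℝ} (hδ : 0 < δ) : EvS fun ε => g.ρ ε ≤ δ := by
  have h := g.to_zero.eventually_lt_const hδ
  rw [eventually_nhdsWithin_iff, Metric.eventually_nhds_iff] at h
  obtain ⟨e, he, hP⟩ := h
  refine ⟨min (e / 2) 1, by positivity, min_le_right _ _, fun ε hε hεe => ?_⟩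
  have hd : dist ε 0 < e := by
    rw [Real.dist_eq, sub_zero, abs_of_pos hε]
    have h1 : ε ≤ e / 2 := le_trans hεe (min_le_left _ _)
    linarith
  exact (hP hd (Set.mem_Ioi.mpr hε)).le

variable {𝕜 : Type} [RCLike 𝕜]

/-- ρ-moderate nets. -/
def Mod (g : Gauge) (x : ℝ → 𝕜) : Prop := ∃ N : ℕ, EvS fun ε => ‖x ε‖ ≤ g.ρ ε ^ (-(N : ℤ))

/-- ρ-negligible nets. -/
def Negl (g : Gauge) (x : ℝ → 𝕜) : Prop := ∀ q : ℕ, EvS fun ε => ‖x ε‖ ≤ g.ρ ε ^ q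

theorem Negl.mod {g : Gauge} {x : ℝ → 𝕜} (h : g.Negl x) : g.Mod x := by
  refine ⟨0, (h 0).mono fun ε hε hε1 hx => ?_⟩
  simpa using hx

theorem negl_sub_self (g : Gauge) (x : ℝ → 𝕜) : g.Negl fun ε => x ε - x ε := fun q =>
  ⟨1, one_pos, le_refl 1, fun ε hε hε1 => by
    simp only [sub_self, norm_zero]
    exact pow_nonneg (g.pos ε hε hε1).le q⟩

theorem negl_of_evs_eq (g : Gauge) {x y : ℝ → 𝕜} (h : EvS fun ε => x ε = y ε) :
    g.Negl fun ε => x ε - y ε := fun q => h.mono fun ε hε hε1 he => by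
  show ‖x ε - y ε‖ ≤ _
  rw [he, sub_self, norm_zero]; exact pow_nonneg (g.pos ε hε hε1).le q

theorem Negl.symm_sub {g : Gauge} {x y : ℝ → 𝕜} (h : g.Negl fun ε => x ε - y ε) :
    g.Negl fun ε => y ε - x ε := fun q => (h q).mono fun ε _ _ hx => by rwa [norm_sub_rev]

theorem Negl.add {g : Gauge} {x y : ℝ → 𝕜} (hx : g.Negl x) (hy : g.Negl y) :
    g.Negl fun ε => x ε + y ε := by
  intro q
  refine (((hx (q+1)).and (hy (q+1))).and (g.evs_le (by norm_num : (0:ℝ) < 1/2))).mono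
    fun ε hε hε1 h => ?_
  obtain ⟨⟨h1, h2⟩, h3⟩ := h
  have hρ := g.pos ε hε hε1
  calc ‖x ε + y ε‖ ≤ ‖x ε‖ + ‖y ε‖ := norm_add_le _ _
    _ ≤ g.ρ ε ^ (q+1) + g.ρ ε ^ (q+1) := add_le_add h1 h2
    _ = 2 * g.ρ ε * g.ρ ε ^ q := by ring
    _ ≤ 1 * g.ρ ε ^ q := by
        apply mul_le_mul_of_nonneg_right _ (pow_nonneg hρ.le q)
        linarith
    _ = g.ρ ε ^ q := one_mul _

theorem Negl.neg {g : Gauge} {y : ℝ → 𝕜} (hy : g.Negl y) : g.Negl fun ε => -(y ε) :=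
  fun q => (hy q).mono fun ε _ _ h => by
    show ‖-(y ε)‖ ≤ _
    rwa [norm_neg]

theorem Negl.sub {g : Gauge} {x y : ℝ → 𝕜} (hx : g.Negl x) (hy : g.Negl y) :
    g.Negl fun ε => x ε - y ε := by
  have h := hx.add hy.neg
  have heq : (fun ε => x ε + -(y ε)) = fun ε => x ε - y ε := by funext ε; ring
  rwa [heq] at h

theorem Negl.triangle {g : Gauge} {x y z : ℝ → 𝕜} (h1 : g.Negl fun ε => x ε - y ε)
    (h2 : g.Negl fun ε => y ε - z ε) : g.Negl fun ε => x ε - z ε := by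
  have h := h1.add h2
  have heq : (fun ε => (x ε - y ε) + (y ε - z ε)) = fun ε => x ε - z ε := by
    funext ε; ring
  rwa [heq] at h

end Gauge

namespace Gauge

variable {𝕜 : Type} [RCLike 𝕜]

theorem zpow_neg_le (g : Gauge) {ε : ℝ} (hε : 0 < ε) (hε1 : ε ≤ 1) {a b : ℕ} (h : a ≤ b) :
    g.ρ ε ^ (-(a:ℤ)) ≤ g.ρ ε ^ (-(b:ℤ)) := by
  apply zpow_le_zpow_right_of_le_one₀ (g.pos ε hε hε1) (g.le_one ε hε hε1)
  omega

theorem Mod.of_norm_le {g : Gauge} {x : ℝ → 𝕜} {y : ℝ → ℝ} (hy : g.Mod y)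
    (h : ∀ ε, 0 < ε → ε ≤ 1 → ‖x ε‖ ≤ |y ε|) : g.Mod x := by
  obtain ⟨N, hN⟩ := hy
  exact ⟨N, hN.mono fun ε hε hε1 hb => le_trans (h ε hε hε1) (by rwa [Real.norm_eq_abs] at hb)⟩

theorem Mod.add {g : Gauge} {x y : ℝ → 𝕜} (hx : g.Mod x) (hy : g.Mod y) :
    g.Mod fun ε => x ε + y ε := by
  obtain ⟨N, hN⟩ := hx; obtain ⟨M, hM⟩ := hy
  refine ⟨N + M + 1, ((hN.and hM).and (g.evs_le (by norm_num : (0:ℝ) < 1/2))).mono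
    fun ε hε hε1 h => ?_⟩
  obtain ⟨⟨h1, h2⟩, h3⟩ := h
  have hρ := g.pos ε hε hε1
  have e1 : g.ρ ε ^ (-(N:ℤ)) ≤ g.ρ ε ^ (-((N+M:ℕ):ℤ)) := g.zpow_neg_le hε hε1 (by omega)
  have e2 : g.ρ ε ^ (-(M:ℤ)) ≤ g.ρ ε ^ (-((N+M:ℕ):ℤ)) := g.zpow_neg_le hε hε1 (by omega)
  have key : g.ρ ε ^ (-((N+M:ℕ):ℤ)) = g.ρ ε ^ (-((N+M+1:ℕ):ℤ)) * g.ρ ε := by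
    rw [← zpow_add_one₀ hρ.ne']
    congr 1
    push_cast
    ring
  have hpos : (0:ℝ) < g.ρ ε ^ (-((N+M+1:ℕ):ℤ)) := zpow_pos hρ _
  calc ‖x ε + y ε‖ ≤ ‖x ε‖ + ‖y ε‖ := norm_add_le _ _
    _ ≤ g.ρ ε ^ (-((N+M:ℕ):ℤ)) + g.ρ ε ^ (-((N+M:ℕ):ℤ)) := add_le_add (h1.trans e1) (h2.trans e2)
    _ = 2 * g.ρ ε * g.ρ ε ^ (-((N+M+1:ℕ):ℤ)) := by rw [key]; ring
    _ ≤ 1 * g.ρ ε ^ (-((N+M+1:ℕ):ℤ)) := by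
        apply mul_le_mul_of_nonneg_right _ hpos.le
        linarith
    _ = g.ρ ε ^ (-((N+M+1:ℕ):ℤ)) := one_mul _

theorem Mod.neg {g : Gauge} {x : ℝ → 𝕜} (hx : g.Mod x) : g.Mod fun ε => -(x ε) := by
  obtain ⟨N, hN⟩ := hx
  exact ⟨N, hN.mono fun ε _ _ h => by rwa [norm_neg]⟩

theorem Mod.sub {g : Gauge} {x y : ℝ → 𝕜} (hx : g.Mod x) (hy : g.Mod y) :
    g.Mod fun ε => x ε - y ε := by
  have h := hx.add hy.neg
  have heq : (fun ε => x ε + -(y ε)) = fun ε => x ε - y ε := by funext ε; ring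
  rwa [heq] at h

theorem Mod.mul {g : Gauge} {x y : ℝ → 𝕜} (hx : g.Mod x) (hy : g.Mod y) :
    g.Mod fun ε => x ε * y ε := by
  obtain ⟨N, hN⟩ := hx; obtain ⟨M, hM⟩ := hy
  refine ⟨N + M, (hN.and hM).mono fun ε hε hε1 h => ?_⟩
  obtain ⟨h1, h2⟩ := h
  have hρ := g.pos ε hε hε1
  calc ‖x ε * y ε‖ = ‖x ε‖ * ‖y ε‖ := norm_mul _ _
    _ ≤ g.ρ ε ^ (-(N:ℤ)) * g.ρ ε ^ (-(M:ℤ)) :=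
        mul_le_mul h1 h2 (norm_nonneg _) (zpow_nonneg hρ.le _)
    _ = g.ρ ε ^ (-((N+M:ℕ):ℤ)) := by rw [← zpow_add₀ hρ.ne']; congr 1; push_cast; ring

theorem Mod.norm {g : Gauge} {x : ℝ → 𝕜} (hx : g.Mod x) : g.Mod fun ε => ‖x ε‖ := by
  obtain ⟨N, hN⟩ := hx
  exact ⟨N, hN.mono fun ε _ _ h => by rwa [norm_norm]⟩

theorem Negl.mul_mod {g : Gauge} {x y : ℝ → 𝕜} (hx : g.Negl x) (hy : g.Mod y) :
    g.Negl fun ε => x ε * y ε := by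
  obtain ⟨M, hM⟩ := hy
  intro q
  refine ((hx (q + M)).and hM).mono fun ε hε hε1 h => ?_
  obtain ⟨h1, h2⟩ := h
  have hρ := g.pos ε hε hε1
  calc ‖x ε * y ε‖ = ‖x ε‖ * ‖y ε‖ := norm_mul _ _
    _ ≤ g.ρ ε ^ (q+M) * g.ρ ε ^ (-(M:ℤ)) :=
        mul_le_mul h1 h2 (norm_nonneg _) (pow_nonneg hρ.le _)
    _ = g.ρ ε ^ q := by
        rw [← zpow_natCast (g.ρ ε) (q+M), ← zpow_add₀ hρ.ne', ← zpow_natCast (g.ρ ε) q]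
        congr 1; push_cast; ring

theorem mod_const (g : Gauge) (c : 𝕜) (hc : ‖c‖ ≤ 1) : g.Mod fun _ => c := by
  refine ⟨0, 1, one_pos, le_refl 1, fun ε hε hε1 => ?_⟩
  simpa using hc

theorem mod_pow (g : Gauge) (q : ℕ) : g.Mod fun ε => g.ρ ε ^ q := by
  refine ⟨0, 1, one_pos, le_refl 1, fun ε hε hε1 => ?_⟩
  have hρ := g.pos ε hε hε1
  show ‖g.ρ ε ^ q‖ ≤ _
  rw [Real.norm_eq_abs, abs_of_nonneg (pow_nonneg hρ.le q)]
  simpa using pow_le_one₀ hρ.le (g.le_one ε hε hε1)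

theorem mod_zpow_neg (g : Gauge) (q : ℕ) : g.Mod fun ε => g.ρ ε ^ (-(q:ℤ)) := by
  refine ⟨q, 1, one_pos, le_refl 1, fun ε hε hε1 => ?_⟩
  have hρ := g.pos ε hε hε1
  show ‖g.ρ ε ^ (-(q:ℤ))‖ ≤ _
  rw [Real.norm_eq_abs, abs_of_nonneg (zpow_nonneg hρ.le _)]

/-- Hypernatural moderateness. -/
def NMod (g : Gauge) (n : ℝ → ℕ) : Prop := g.Mod fun ε => (n ε : ℝ)

end Gauge

instance gSetoid (g : Gauge) (𝕜 : Type) [RCLike 𝕜] : Setoid {x : ℝ → 𝕜 // g.Mod x} where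
  r a b := g.Negl fun ε => a.1 ε - b.1 ε
  iseqv := ⟨fun a => g.negl_sub_self a.1, fun h => h.symm_sub, fun h h' => h.triangle h'⟩

instance natSetoid (g : Gauge) : Setoid {n : ℝ → ℕ // g.NMod n} where
  r a b := g.Negl fun ε => (a.1 ε : ℝ) - (b.1 ε : ℝ)
  iseqv := ⟨fun a => g.negl_sub_self _, fun h => h.symm_sub, fun h h' => h.triangle h'⟩

/-- The ring of Robinson-Colombeau generalized numbers (ℂ~ for 𝕜 = ℂ, ℝ~ for 𝕜 = ℝ). -/
abbrev GQ (g : Gauge) (𝕜 : Type) [RCLike 𝕜] := Quotient (gSetoid g 𝕜)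

abbrev Ct (g : Gauge) := GQ g ℂ
abbrev Rt (g : Gauge) := GQ g ℝ

/-- The set of hypernatural numbers ℕ~. -/
abbrev Nt (g : Gauge) := Quotient (natSetoid g)

def GQ.mk (g : Gauge) {𝕜 : Type} [RCLike 𝕜] (x : ℝ → 𝕜) (h : g.Mod x) : GQ g 𝕜 :=
  Quotient.mk (gSetoid g 𝕜) ⟨x, h⟩

/-- `x` is a representative of the generalized number `z`. -/
def IsRep (g : Gauge) {𝕜 : Type} [RCLike 𝕜] (x : ℝ → 𝕜) (z : GQ g 𝕜) : Prop :=
  ∃ h : g.Mod x, GQ.mk g x h = z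

def Nt.mk (g : Gauge) (n : ℝ → ℕ) (h : g.NMod n) : Nt g := Quotient.mk (natSetoid g) ⟨n, h⟩

def Nt.IsRep (g : Gauge) (n : ℝ → ℕ) (m : Nt g) : Prop := ∃ h : g.NMod n, Nt.mk g n h = m

/-- dρ^q as an element of ℝ~. -/
def Gauge.dpow (g : Gauge) (q : ℕ) : Rt g := GQ.mk g (fun ε => g.ρ ε ^ q) (g.mod_pow q)

/-- dρ^(−q) as an element of ℝ~. -/
def Gauge.dpowNeg (g : Gauge) (q : ℕ) : Rt g := GQ.mk g (fun ε => g.ρ ε ^ (-(q:ℤ))) (g.mod_zpow_neg q)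

def GQ.zero (g : Gauge) (𝕜 : Type) [RCLike 𝕜] : GQ g 𝕜 :=
  GQ.mk g (fun _ => 0) (g.mod_const 0 (by simp))

def GQ.one (g : Gauge) (𝕜 : Type) [RCLike 𝕜] : GQ g 𝕜 :=
  GQ.mk g (fun _ => 1) (g.mod_const 1 (by simp))

variable {𝕜 : Type} [RCLike 𝕜]

/-- Order relation on ℝ~ (via some representatives). -/
def Rt.le (g : Gauge) (x y : Rt g) : Prop :=
  ∃ a b : {u : ℝ → ℝ // g.Mod u}, Quotient.mk (gSetoid g ℝ) a = x ∧
    Quotient.mk (gSetoid g ℝ) b = y ∧ EvS fun ε => a.1 ε ≤ b.1 ε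

/-- Strict order relation on ℝ~: `x < y` iff `y − x ≥ dρ^m` for some m. -/
def Rt.lt (g : Gauge) (x y : Rt g) : Prop :=
  ∃ a b : {u : ℝ → ℝ // g.Mod u}, Quotient.mk (gSetoid g ℝ) a = x ∧
    Quotient.mk (gSetoid g ℝ) b = y ∧ ∃ m : ℕ, EvS fun ε => g.ρ ε ^ m ≤ b.1 ε - a.1 ε

/-- Order on ℕ~. -/
def Nt.le (g : Gauge) (m n : Nt g) : Prop :=
  ∃ a b : {k : ℝ → ℕ // g.NMod k}, Quotient.mk (natSetoid g) a = m ∧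
    Quotient.mk (natSetoid g) b = n ∧ EvS fun ε => a.1 ε ≤ b.1 ε

/-- The relation `|z − w| < r` between generalized numbers, r ∈ ℝ~. -/
def GQ.absLt (g : Gauge) (z w : GQ g 𝕜) (r : Rt g) : Prop :=
  ∃ a b : {x : ℝ → 𝕜 // g.Mod x}, ∃ u : {x : ℝ → ℝ // g.Mod x},
    Quotient.mk (gSetoid g 𝕜) a = z ∧ Quotient.mk (gSetoid g 𝕜) b = w ∧
    Quotient.mk (gSetoid g ℝ) u = r ∧
    ∃ m : ℕ, EvS fun ε => ‖a.1 ε - b.1 ε‖ + g.ρ ε ^ m ≤ u.1 ε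

/-- The relation `|z − w| ≤ r`. -/
def GQ.absLe (g : Gauge) (z w : GQ g 𝕜) (r : Rt g) : Prop :=
  ∃ a b : {x : ℝ → 𝕜 // g.Mod x}, ∃ u : {x : ℝ → ℝ // g.Mod x},
    Quotient.mk (gSetoid g 𝕜) a = z ∧ Quotient.mk (gSetoid g 𝕜) b = w ∧
    Quotient.mk (gSetoid g ℝ) u = r ∧ EvS fun ε => ‖a.1 ε - b.1 ε‖ ≤ u.1 ε

/-- `x ∈ ℂ~` is invertible. -/
def GQ.Invertible (g : Gauge) (x : GQ g 𝕜) : Prop :=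
  ∃ a : {u : ℝ → 𝕜 // g.Mod u}, Quotient.mk (gSetoid g 𝕜) a = x ∧
    ∃ m : ℕ, EvS fun ε => g.ρ ε ^ m ≤ ‖a.1 ε‖

/-- l is the hyperlimit of the hypersequence a. -/
def HyperLim (g : Gauge) (a : Nt g → GQ g 𝕜) (l : GQ g 𝕜) : Prop :=
  ∀ q : ℕ, ∃ M : Nt g, ∀ n : Nt g, Nt.le g M n → GQ.absLt g (a n) l (g.dpow q)

/-- ρ-moderate over hypersums. -/
def Gauge.SMod (g : Gauge) (A : ℕ → ℝ → 𝕜) : Prop :=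
  ∀ N : ℝ → ℕ, g.NMod N → g.Mod fun ε => ∑ n ∈ Finset.range (N ε + 1), A n ε

/-- Hyperseries equivalence of coefficient nets. -/
def Gauge.SEquiv (g : Gauge) (A B : ℕ → ℝ → 𝕜) : Prop :=
  ∀ N M : ℝ → ℕ, g.NMod N → g.NMod M →
    g.Negl fun ε => ∑ n ∈ Finset.Icc (N ε) (M ε), (A n ε - B n ε)

theorem nat_eq_of_abs_sub_lt_one {a b : ℕ} (h : |(a:ℝ) - b| < 1) : a = b := by
  rcases lt_trichotomy a b with hlt | he | hgt
  · exfalso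
    have h1 : (a:ℝ) + 1 ≤ b := by exact_mod_cast Nat.succ_le_of_lt hlt
    have h2 := abs_lt.mp h
    linarith [h2.1]
  · exact he
  · exfalso
    have h1 : (b:ℝ) + 1 ≤ a := by exact_mod_cast Nat.succ_le_of_lt hgt
    have h2 := abs_lt.mp h
    linarith [h2.2]

theorem natEqEv (g : Gauge) {N M : ℝ → ℕ} (h : g.Negl fun ε => (N ε : ℝ) - M ε) :
    EvS fun ε => N ε = M ε := by
  refine ((h 1).and (g.evs_le (by norm_num : (0:ℝ) < 1/2))).mono fun ε hε hε1 hh => ?_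
  obtain ⟨h1, h2⟩ := hh
  apply nat_eq_of_abs_sub_lt_one
  have : ‖(N ε : ℝ) - M ε‖ = |(N ε : ℝ) - M ε| := Real.norm_eq_abs _
  rw [this] at h1
  calc |(N ε:ℝ) - M ε| ≤ g.ρ ε ^ 1 := h1
    _ = g.ρ ε := pow_one _
    _ ≤ 1/2 := h2
    _ < 1 := by norm_num

/-- Lift a representative-level construction indexed by hypernaturals to ℕ~. -/
def Nt.lift (g : Gauge) (F : (ℝ → ℕ) → ℝ → 𝕜)
    (hmod : ∀ N, g.NMod N → g.Mod (F N))
    (hcong : ∀ N M : ℝ → ℕ, EvS (fun ε => N ε = M ε) → EvS fun ε => F N ε = F M ε) :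
    Nt g → GQ g 𝕜 :=
  Quotient.lift (fun N => GQ.mk g (F N.1) (hmod N.1 N.2)) (by
    intro a b hab
    apply Quotient.sound
    exact g.negl_of_evs_eq (hcong a.1 b.1 (natEqEv g hab)))

def Nt.lift₂ (g : Gauge) (F : (ℝ → ℕ) → (ℝ → ℕ) → ℝ → 𝕜)
    (hmod : ∀ N M, g.NMod N → g.NMod M → g.Mod (F N M))
    (hcong : ∀ N N' M M' : ℝ → ℕ, EvS (fun ε => N ε = N' ε) → EvS (fun ε => M ε = M' ε) →
      EvS fun ε => F N M ε = F N' M' ε) :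
    Nt g → Nt g → GQ g 𝕜 :=
  Quotient.lift₂ (fun N M => GQ.mk g (F N.1 M.1) (hmod N.1 M.1 N.2 M.2)) (by
    intro a b a' b' ha hb
    apply Quotient.sound
    exact g.negl_of_evs_eq (hcong a.1 a'.1 b.1 b'.1 (natEqEv g ha) (natEqEv g hb)))

/-- The hypersequence of partial hypersums N ↦ Σ_{n=0}^{N} a_n. -/
def partialSum (g : Gauge) (A : ℕ → ℝ → 𝕜) (hA : g.SMod A) : Nt g → GQ g 𝕜 :=
  Nt.lift g (fun N ε => ∑ n ∈ Finset.range (N ε + 1), A n ε) (fun N hN => hA N hN)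
    (fun N M h => h.mono fun ε _ _ he => by (try simp only []); rw [he])

/-- The hyperseries Σ_{n∈ℕ~} a_n converges to s. -/
def HSConv (g : Gauge) (A : ℕ → ℝ → 𝕜) (hA : g.SMod A) (s : GQ g 𝕜) : Prop :=
  HyperLim g (partialSum g A hA) s

theorem Gauge.NMod.mono {g : Gauge} {a b : ℝ → ℕ} (hb : g.NMod b) (h : ∀ ε, a ε ≤ b ε) :
    g.NMod a := by
  refine Gauge.Mod.of_norm_le hb fun ε _ _ => ?_
  rw [Real.norm_eq_abs, abs_of_nonneg (Nat.cast_nonneg _), abs_of_nonneg (Nat.cast_nonneg _)]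
  exact_mod_cast h ε

theorem Gauge.SMod.range {g : Gauge} {A : ℕ → ℝ → 𝕜} (hA : g.SMod A) {N : ℝ → ℕ}
    (hN : g.NMod N) : g.Mod fun ε => ∑ n ∈ Finset.range (N ε), A n ε := by
  have hN' : g.NMod fun ε => N ε - 1 := hN.mono fun ε => Nat.sub_le _ _
  obtain ⟨K, hK⟩ := hA _ hN'
  refine ⟨K, hK.mono fun ε hε hε1 h => ?_⟩
  rcases Nat.eq_zero_or_pos (N ε) with h0 | h0
  · show ‖∑ n ∈ Finset.range (N ε), A n ε‖ ≤ _
    rw [h0]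
    simp only [Finset.range_zero, Finset.sum_empty, norm_zero]
    exact le_trans (norm_nonneg _) h
  · have he : N ε - 1 + 1 = N ε := Nat.succ_pred_eq_of_pos h0
    show ‖∑ n ∈ Finset.range (N ε), A n ε‖ ≤ _
    rw [← he]
    exact h

theorem Gauge.SMod.termMod {g : Gauge} {A : ℕ → ℝ → 𝕜} (hA : g.SMod A) {N : ℝ → ℕ}
    (hN : g.NMod N) : g.Mod fun ε => A (N ε) ε := by
  have h := (hA N hN).sub (hA.range hN)
  have heq : (fun ε => (∑ n ∈ Finset.range (N ε + 1), A n ε) -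
      ∑ n ∈ Finset.range (N ε), A n ε) = fun ε => A (N ε) ε := by
    funext ε
    rw [Finset.sum_range_succ]
    ring
  rwa [heq] at h

/-- The extension of the terms of a hyperseries to ℕ~ : n ↦ a_n. -/
def GQ.term (g : Gauge) (A : ℕ → ℝ → 𝕜) (hA : g.SMod A) : Nt g → GQ g 𝕜 :=
  Nt.lift g (fun N ε => A (N ε) ε) (fun _ hN => hA.termMod hN)
    (fun N M h => h.mono fun ε _ _ he => by (try simp only []); rw [he])

theorem norm_sum_Icc_le (A : ℕ → 𝕜) (N M : ℕ) :
    ‖∑ n ∈ Finset.Icc N M, A n‖ ≤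
      ‖∑ n ∈ Finset.range (M+1), A n‖ + ‖∑ n ∈ Finset.range N, A n‖ := by
  rcases le_or_gt N (M+1) with h | h
  · have key : (∑ n ∈ Finset.range N, A n) + (∑ n ∈ Finset.Icc N M, A n)
        = ∑ n ∈ Finset.range (M+1), A n := by
      rw [Finset.range_eq_Ico, Finset.range_eq_Ico, show Finset.Icc N M = Finset.Ico N (M+1) by
        ext; simp only [Finset.mem_Icc, Finset.mem_Ico]; omega]
      exact Finset.sum_Ico_consecutive (f := A) (Nat.zero_le N) h
    have heq : ∑ n ∈ Finset.Icc N M, A n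
        = (∑ n ∈ Finset.range (M+1), A n) - ∑ n ∈ Finset.range N, A n := by
      rw [← key]; ring
    rw [heq]
    exact norm_sub_le _ _
  · rw [Finset.Icc_eq_empty (by omega)]
    simp only [Finset.sum_empty, norm_zero]
    positivity

theorem Gauge.SMod.IccMod {g : Gauge} {A : ℕ → ℝ → 𝕜} (hA : g.SMod A) {N M : ℝ → ℕ}
    (hN : g.NMod N) (hM : g.NMod M) :
    g.Mod fun ε => ∑ n ∈ Finset.Icc (N ε) (M ε), A n ε := by
  have h1 := (hA M hM).norm
  have h2 := (hA.range hN).norm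
  refine Gauge.Mod.of_norm_le (h1.add h2) fun ε _ _ => ?_
  have hnn : (0:ℝ) ≤ ‖∑ n ∈ Finset.range (M ε + 1), A n ε‖ + ‖∑ n ∈ Finset.range (N ε), A n ε‖ :=
    add_nonneg (norm_nonneg _) (norm_nonneg _)
  rw [abs_of_nonneg hnn]
  exact norm_sum_Icc_le _ _ _

/-- The hypersum Σ_{n=N}^{M} a_n as a function of N, M ∈ ℕ~. -/
def hypersum (g : Gauge) (A : ℕ → ℝ → 𝕜) (hA : g.SMod A) : Nt g → Nt g → GQ g 𝕜 :=
  Nt.lift₂ g (fun N M ε => ∑ n ∈ Finset.Icc (N ε) (M ε), A n ε)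
    (fun _ _ hN hM => hA.IccMod hN hM)
    (fun N N' M M' h h' => (h.and h').mono fun ε _ _ he => by
      (try simp only []); rw [he.1, he.2])

theorem Gauge.NMod.add {g : Gauge} {a b : ℝ → ℕ} (ha : g.NMod a) (hb : g.NMod b) :
    g.NMod fun ε => a ε + b ε := by
  have h := Gauge.Mod.add (𝕜 := ℝ) ha hb
  show g.Mod fun ε => ((a ε + b ε : ℕ) : ℝ)
  have heq : (fun ε => ((a ε + b ε : ℕ) : ℝ)) = fun ε => ((a ε : ℝ) + (b ε : ℝ)) := by
    funext ε; push_cast; ring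
  rwa [heq]

/-- Addition on ℕ~. -/
def Nt.add (g : Gauge) : Nt g → Nt g → Nt g :=
  Quotient.lift₂ (fun a b => Nt.mk g (fun ε => a.1 ε + b.1 ε) (a.2.add b.2)) (by
    intro a b a' b' ha hb
    apply Quotient.sound
    have h := ((natEqEv g ha).and (natEqEv g hb))
    exact g.negl_of_evs_eq (h.mono fun ε _ _ he => by
      show ((a.1 ε + b.1 ε : ℕ) : ℝ) = ((a'.1 ε + b'.1 ε : ℕ) : ℝ)
      rw [he.1, he.2]))

/-- Subtraction on generalized numbers. -/
def GQ.sub (g : Gauge) : GQ g 𝕜 → GQ g 𝕜 → GQ g 𝕜 :=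
  Quotient.lift₂ (fun a b => GQ.mk g (fun ε => a.1 ε - b.1 ε) (a.2.sub b.2)) (by
    intro a b a' b' ha hb
    apply Quotient.sound
    show g.Negl _
    have h := Gauge.Negl.sub ha hb
    have heq : (fun ε => (a.1 ε - a'.1 ε) - (b.1 ε - b'.1 ε))
        = fun ε => (a.1 ε - b.1 ε) - (a'.1 ε - b'.1 ε) := by funext ε; ring
    rwa [heq] at h)

/-- Multiplication on generalized numbers. -/
def GQ.mul (g : Gauge) : GQ g 𝕜 → GQ g 𝕜 → GQ g 𝕜 :=
  Quotient.lift₂ (fun a b => GQ.mk g (fun ε => a.1 ε * b.1 ε) (a.2.mul b.2)) (by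
    intro a b a' b' ha hb
    apply Quotient.sound
    show g.Negl _
    have h1 : g.Negl fun ε => (a.1 ε - a'.1 ε) * b.1 ε := Gauge.Negl.mul_mod ha b.2
    have h2 : g.Negl fun ε => (b.1 ε - b'.1 ε) * a'.1 ε := Gauge.Negl.mul_mod hb a'.2
    have h := h1.add h2
    have heq : (fun ε => (a.1 ε - a'.1 ε) * b.1 ε + (b.1 ε - b'.1 ε) * a'.1 ε)
        = fun ε => a.1 ε * b.1 ε - a'.1 ε * b'.1 ε := by funext ε; ring
    rwa [heq] at h)

/-- The absolute value |·| : ℂ~ → ℝ~. -/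
def GQ.abs (g : Gauge) : GQ g 𝕜 → Rt g :=
  Quotient.lift (fun a => GQ.mk g (fun ε => ‖a.1 ε‖) a.2.norm) (by
    intro a b hab
    apply Quotient.sound
    show g.Negl _
    intro q
    refine (hab q).mono fun ε _ _ h => ?_
    show ‖‖a.1 ε‖ - ‖b.1 ε‖‖ ≤ _
    rw [Real.norm_eq_abs]
    exact le_trans (abs_norm_sub_norm_le _ _) h)

/-- Weakly ρ-moderate coefficient nets. -/
def Gauge.WMod (g : Gauge) (a : ℕ → ℝ → ℂ) : Prop :=
  ∃ Q R : ℕ, EvS fun ε => ∀ n : ℕ, ‖a n ε‖ ≤ g.ρ ε ^ (-((n * Q + R : ℕ) : ℤ))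

/-- Strong ρ-equivalence of coefficient nets. -/
def Gauge.StrEquiv (g : Gauge) (a b : ℕ → ℝ → ℂ) : Prop :=
  ∀ q r : ℕ, EvS fun ε => ∀ n : ℕ, ‖a n ε - b n ε‖ ≤ g.ρ ε ^ (n * q + r)

/-- The net of radii of convergence r_ε = (limsup_n |a_{nε}|^{1/n})⁻¹ ∈ [0,∞]. -/
def radNet (a : ℕ → ℝ → ℂ) (ε : ℝ) : ENNReal :=
  (Filter.limsup (fun n : ℕ => ENNReal.ofReal (‖a n ε‖ ^ ((n : ℝ)⁻¹))) Filter.atTop)⁻¹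

/-- Condition (i): |z − c| < rad (a_n)_c, as classes (via representatives). -/
def RadLt (g : Gauge) (a : ℕ → ℝ → ℂ) (z c : Ct g) : Prop :=
  ∃ zr cr : ℝ → ℂ, ∃ a' : ℕ → ℝ → ℂ, IsRep g zr z ∧ IsRep g cr c ∧
    g.WMod a' ∧ g.StrEquiv a a' ∧
    ∃ m : ℕ, EvS fun ε => ENNReal.ofReal (‖zr ε - cr ε‖ + g.ρ ε ^ m) ≤ radNet a' ε

/-- The coefficient net of the hyper-power series Σ a_n (z−c)^n. -/
def PSeriesNet (a : ℕ → ℝ → ℂ) (zr cr : ℝ → ℂ) : ℕ → ℝ → ℂ :=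
  fun n ε => a n ε * (zr ε - cr ε) ^ n

/-- Conditions (ii)-(iv) of the definition of the set of convergence, for given
representatives. -/
def ConvConds (g : Gauge) (a : ℕ → ℝ → ℂ) (zr cr : ℝ → ℂ) (z : Ct g) : Prop :=
  ∃ hS : g.SMod (PSeriesNet a zr cr),
    (EvS fun ε => Summable fun n : ℕ => PSeriesNet a zr cr n ε) ∧
    (∃ hm : g.Mod fun ε => ∑' n : ℕ, PSeriesNet a zr cr n ε,
      HyperLim g (partialSum g _ hS) (GQ.mk g _ hm)) ∧
    (∀ zr' : ℝ → ℂ, IsRep g zr' z →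
      (EvS fun ε => Summable fun n : ℕ => (n : ℂ) * a n ε * (zr' ε - cr ε) ^ (n - 1)) ∧
      g.Mod fun ε => ∑' n : ℕ, (n : ℂ) * a n ε * (zr' ε - cr ε) ^ (n - 1))

/-- The set of convergence σ((a_n)_c, c) of a hyper-power series. -/
def convSet (g : Gauge) (a : ℕ → ℝ → ℂ) (c : Ct g) : Set (Ct g) :=
  { z | RadLt g a z c ∧
      ∃ zr cr : ℝ → ℂ, ∃ a' : ℕ → ℝ → ℂ, IsRep g zr z ∧ IsRep g cr c ∧
        g.WMod a' ∧ g.StrEquiv a a' ∧ ConvConds g a' zr cr z }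

/-- Sharply open subsets of ℂ~. -/
def SharplyOpen (g : Gauge) (U : Set (Ct g)) : Prop :=
  ∀ z ∈ U, ∃ r : Rt g, Rt.lt g (GQ.zero g ℝ) r ∧ ∀ w : Ct g, GQ.absLt g w z r → w ∈ U

/-- `P ε` for all small ε in L. -/
def EvSOn (L : Set ℝ) (P : ℝ → Prop) : Prop :=
  ∃ ε₀ : ℝ, 0 < ε₀ ∧ ε₀ ≤ 1 ∧ ∀ ε ∈ L, 0 < ε → ε ≤ ε₀ → P ε

/-- x ∈ ℂ~ is invertible on the subpoint L. -/
def GQ.InvertibleOn (g : Gauge) {𝕜 : Type} [RCLike 𝕜] (L : Set ℝ) (x : GQ g 𝕜) : Prop :=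
  ∃ a : {u : ℝ → 𝕜 // g.Mod u}, Quotient.mk (gSetoid g 𝕜) a = x ∧
    ∃ m : ℕ, EvSOn L fun ε => g.ρ ε ^ m ≤ ‖a.1 ε‖

theorem Gauge.nmod_const (g : Gauge) (c : ℕ) : g.NMod fun _ => c := by
  refine ⟨c + 1, (g.evs_le (by positivity : (0:ℝ) < 1/(c+1))).mono fun ε hε hε1 h3 => ?_⟩
  have hρ := g.pos ε hε hε1
  show ‖((c:ℕ) : ℝ)‖ ≤ _
  rw [Real.norm_eq_abs, abs_of_nonneg (Nat.cast_nonneg _)]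
  have hc1 : (0:ℝ) < (c:ℝ) + 1 := by positivity
  calc (c:ℝ) ≤ 1 / g.ρ ε := by
        rw [le_div_iff₀ hρ]
        calc (c:ℝ) * g.ρ ε ≤ (c:ℝ) * (1/(c+1)) :=
              mul_le_mul_of_nonneg_left h3 (Nat.cast_nonneg c)
          _ ≤ 1 := by rw [mul_one_div, div_le_one hc1]; linarith
    _ = g.ρ ε ^ (-((1:ℕ):ℤ)) := by
        rw [show (-((1:ℕ):ℤ)) = (-1:ℤ) by norm_num, zpow_neg_one, one_div]
    _ ≤ g.ρ ε ^ (-((c+1:ℕ):ℤ)) := g.zpow_neg_le hε hε1 (by omega)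

theorem Gauge.SMod.shift {g : Gauge} {𝕜 : Type} [RCLike 𝕜] {A : ℕ → ℝ → 𝕜}
    (hA : g.SMod A) (N₀ : ℕ) : g.SMod fun n ε => A (n + N₀) ε := by
  intro K hK
  have h1 := hA (fun ε => N₀ + K ε) ((g.nmod_const N₀).add hK)
  have h2 := hA.range (g.nmod_const N₀)
  have h := h1.sub h2
  have heq : (fun ε => (∑ n ∈ Finset.range (N₀ + K ε + 1), A n ε) -
      ∑ n ∈ Finset.range N₀, A n ε) = fun ε => ∑ n ∈ Finset.range (K ε + 1), A (n + N₀) ε := by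
    funext ε
    have e1 : (∑ n ∈ Finset.range N₀, A n ε) + (∑ n ∈ Finset.Ico N₀ (N₀ + K ε + 1), A n ε)
        = ∑ n ∈ Finset.range (N₀ + K ε + 1), A n ε :=
      Finset.sum_range_add_sum_Ico _ (by omega)
    have e2 : ∑ n ∈ Finset.Ico N₀ (N₀ + K ε + 1), A n ε
        = ∑ n ∈ Finset.range (K ε + 1), A (N₀ + n) ε := by
      rw [Finset.sum_Ico_eq_sum_range, show N₀ + K ε + 1 - N₀ = K ε + 1 by omega]
    rw [← e1, e2]
    rw [add_sub_cancel_left]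
    exact Finset.sum_congr rfl fun n _ => by rw [Nat.add_comm]
  rwa [heq] at h



open Filter Finset

noncomputable section

namespace Liouv

theorem exists_bound_of_summable {f : ℕ → ℝ} (hf : Summable f) (h0 : ∀ n, 0 ≤ f n) :
    ∃ C : ℝ, 0 ≤ C ∧ ∀ n, f n ≤ C :=
  ⟨∑' n, f n, tsum_nonneg h0, fun n => Summable.le_tsum hf n fun m _ => h0 m⟩

theorem sum_range_pow_le {x : ℝ} (h0 : 0 ≤ x) (h1 : x ≤ 1/2) (K : ℕ) :
    ∑ n ∈ Finset.range K, x ^ n ≤ 2 := by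
  have hx1 : x < 1 := lt_of_le_of_lt h1 (by norm_num)
  have h := Summable.sum_le_tsum (Finset.range K) (fun i _ => pow_nonneg h0 i)
    (summable_geometric_of_lt_one h0 hx1)
  rw [tsum_geometric_of_lt_one h0 hx1] at h
  refine h.trans ?_
  rw [show (2:ℝ) = (1/2 : ℝ)⁻¹ by norm_num]
  apply inv_anti₀ (by norm_num)
  linarith

theorem sum_Icc_pow_le {x : ℝ} (h0 : 0 ≤ x) (h1 : x ≤ 1/2) (m K : ℕ) :
    ∑ n ∈ Finset.Icc m K, x ^ n ≤ 2 * x ^ m := by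
  rcases le_or_gt m K with h | h
  · have : Finset.Icc m K = Finset.Ico m (K+1) := by rw [Finset.Ico_add_one_right_eq_Icc]
    rw [this, Finset.sum_Ico_eq_sum_range]
    have : ∀ j ∈ Finset.range (K + 1 - m), x ^ (m + j) = x ^ m * x ^ j := fun j _ => pow_add x m j
    rw [Finset.sum_congr rfl this, ← Finset.mul_sum]
    calc x ^ m * ∑ j ∈ Finset.range (K+1-m), x ^ j ≤ x ^ m * 2 :=
          mul_le_mul_of_nonneg_left (sum_range_pow_le h0 h1 _) (pow_nonneg h0 m)
      _ = 2 * x ^ m := by ring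
  · rw [Finset.Icc_eq_empty (by omega)]
    simp only [Finset.sum_empty]
    positivity

theorem tsum_pow_le {x : ℝ} (h0 : 0 ≤ x) (h1 : x ≤ 1/2) : ∑' n : ℕ, x ^ n ≤ 2 := by
  have hx1 : x < 1 := lt_of_le_of_lt h1 (by norm_num)
  rw [tsum_geometric_of_lt_one h0 hx1]
  rw [show (2:ℝ) = (1/2 : ℝ)⁻¹ by norm_num]
  apply inv_anti₀ (by norm_num)
  linarith

theorem tsum_nat_mul_pow_le {x : ℝ} (h0 : 0 ≤ x) (h1 : x ≤ 1/2) :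
    ∑' n : ℕ, (n : ℝ) * x ^ n ≤ 2 := by
  have hx1 : ‖x‖ < 1 := by rw [Real.norm_eq_abs, abs_of_nonneg h0]; linarith
  rw [tsum_coe_mul_geometric_of_norm_lt_one hx1]
  have h2 : (1/2 : ℝ) ≤ 1 - x := by linarith
  have h3 : (0:ℝ) < (1-x)^2 := by nlinarith
  rw [div_le_iff₀ h3]
  nlinarith

/-- m-th root of unity. -/
def uroot (m : ℕ) : ℂ := Complex.exp ((2 * Real.pi / m : ℝ) * Complex.I)

theorem uroot_norm (m : ℕ) : ‖uroot m‖ = 1 := by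
  rw [uroot, Complex.norm_exp_ofReal_mul_I]

theorem uroot_pow (m l : ℕ) : uroot m ^ l = Complex.exp ((2 * Real.pi * l / m : ℝ) * Complex.I) := by
  rw [uroot, ← Complex.exp_nat_mul]
  congr 1
  push_cast
  ring

theorem uroot_pow_eq_one_iff {m : ℕ} (hm : 0 < m) (l : ℕ) : uroot m ^ l = 1 ↔ m ∣ l := by
  constructor
  · intro h
    rw [uroot_pow, Complex.exp_eq_one_iff] at h
    obtain ⟨k, hk⟩ := h
    have h2 : ((2 * Real.pi * l / m : ℝ) : ℂ) * Complex.I = (((2 * Real.pi * k : ℝ)) : ℂ) * Complex.I := by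
      rw [hk]; push_cast; ring
    have hI : ((2 * Real.pi * l / m : ℝ) : ℂ) = ((2 * Real.pi * k : ℝ) : ℂ) :=
      mul_right_cancel₀ Complex.I_ne_zero h2
    have hr : (2 * Real.pi * l / m : ℝ) = 2 * Real.pi * k := by exact_mod_cast hI
    have hπ : (0:ℝ) < 2 * Real.pi := by positivity
    have hm' : (m:ℝ) ≠ 0 := by positivity
    have hl : (l : ℝ) = k * m := by
      have hr2 : (2 * Real.pi) * (l : ℝ) = (2 * Real.pi) * ((k:ℝ) * m) := by
        field_simp at hr
        rw [hr]; ring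
      have := mul_left_cancel₀ (ne_of_gt hπ) hr2
      linarith
    have hlz : (l : ℤ) = k * m := by exact_mod_cast hl
    have : (m : ℤ) ∣ (l : ℤ) := ⟨k, by linarith [hlz]⟩
    exact_mod_cast this
  · rintro ⟨t, rfl⟩
    have h1 : uroot m ^ m = 1 := by
      rw [uroot_pow]
      have : (2 * Real.pi * m / m : ℝ) = 2 * Real.pi := by
        field_simp
      rw [this]
      have : ((2 * Real.pi : ℝ) : ℂ) * Complex.I = 2 * (Real.pi : ℂ) * Complex.I := by push_cast; ring
      rw [this, Complex.exp_two_pi_mul_I]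
    rw [pow_mul, h1, one_pow]

theorem uroot_geom {m : ℕ} (hm : 0 < m) (l : ℕ) :
    ∑ j ∈ Finset.range m, (uroot m ^ l) ^ j = if m ∣ l then (m:ℂ) else 0 := by
  by_cases h : m ∣ l
  · rw [if_pos h, (uroot_pow_eq_one_iff hm l).2 h]
    simp
  · rw [if_neg h]
    have hx : uroot m ^ l ≠ 1 := fun hc => h ((uroot_pow_eq_one_iff hm l).1 hc)
    rw [geom_sum_eq hx]
    have : (uroot m ^ l) ^ m = 1 := by
      rw [← pow_mul, mul_comm, pow_mul, (uroot_pow_eq_one_iff hm m).2 dvd_rfl, one_pow]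
    rw [this, sub_self, zero_div]

end Liouv

namespace Liouv

theorem tail_tendsto {f : ℕ → ℝ} (hf : Summable f) :
    Tendsto (fun m => ∑' k, f (k + m)) atTop (nhds 0) := by
  have h1 : ∀ m, ∑' k, f (k + m) = (∑' k, f k) - ∑ i ∈ Finset.range m, f i := by
    intro m
    have := Summable.sum_add_tsum_nat_add m hf
    linarith
  simp only [h1]
  have h2 : Tendsto (fun m => ∑ i ∈ Finset.range m, f i) atTop (nhds (∑' k, f k)) :=
    hf.hasSum.tendsto_sum_nat
  have h3 := h2.const_sub (∑' k, f k)
  simpa using h3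

/-- Cauchy-type coefficient estimate via roots of unity. -/
theorem coeff_bound (a : ℕ → ℂ) (r C : ℝ) (hr : 0 < r)
    (hsum : Summable fun k => ‖a k‖ * r ^ k)
    (hbd : ∀ w : ℂ, ‖w‖ = r → ‖∑' k, a k * w ^ k‖ ≤ C) :
    ∀ n, ‖a n‖ * r ^ n ≤ C := by
  intro n
  set f : ℕ → ℝ := fun k => ‖a k‖ * r ^ k with hf_def
  have hf0 : ∀ k, 0 ≤ f k := fun k => mul_nonneg (norm_nonneg _) (pow_nonneg hr.le k)
  -- key estimate for every m > n
  have key : ∀ m, n < m → ‖a n‖ * r ^ n ≤ C + ∑' k, f (k + m) := by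
    intro m hnm
    have hm : 0 < m := lt_of_le_of_lt (Nat.zero_le n) hnm
    set ω := uroot m with hω
    set e := (m - 1) * n with he
    have hdvd_en : m ∣ e + n := ⟨n, by rw [he]; cases m with
      | zero => omega
      | succ m' => simp [Nat.succ_sub_one]; ring⟩
    have hnormpt : ∀ j : ℕ, ‖(r : ℂ) * ω ^ j‖ = r := by
      intro j
      rw [norm_mul, norm_pow, uroot_norm, one_pow, mul_one, Complex.norm_real,
        Real.norm_eq_abs, abs_of_pos hr]
    have hsummand : ∀ j : ℕ, Summable fun k => a k * ((r:ℂ) * ω ^ j) ^ k := by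
      intro j
      apply Summable.of_norm
      have : (fun k => ‖a k * ((r:ℂ) * ω ^ j) ^ k‖) = f := by
        funext k
        rw [norm_mul, norm_pow, hnormpt]
      rw [this]
      exact hsum
    have hSj : ∀ j : ℕ, HasSum (fun k => (ω ^ e) ^ j * (a k * ((r:ℂ) * ω ^ j) ^ k))
        ((ω ^ e) ^ j * ∑' k, a k * ((r:ℂ) * ω ^ j) ^ k) := fun j =>
      ((hsummand j).hasSum).mul_left _
    have hS : HasSum (fun k => ∑ j ∈ Finset.range m, (ω ^ e) ^ j * (a k * ((r:ℂ) * ω ^ j) ^ k))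
        (∑ j ∈ Finset.range m, (ω ^ e) ^ j * ∑' k, a k * ((r:ℂ) * ω ^ j) ^ k) :=
      hasSum_sum fun j _ => hSj j
    set S := ∑ j ∈ Finset.range m, (ω ^ e) ^ j * ∑' k, a k * ((r:ℂ) * ω ^ j) ^ k with hSdef
    set v : ℕ → ℂ := fun k => a k * (r:ℂ) ^ k * (if m ∣ e + k then (m:ℂ) else 0) with hv
    have hterm : (fun k => ∑ j ∈ Finset.range m, (ω ^ e) ^ j * (a k * ((r:ℂ) * ω ^ j) ^ k)) = v := by
      funext k
      have h1 : ∀ j ∈ Finset.range m, (ω ^ e) ^ j * (a k * ((r:ℂ) * ω ^ j) ^ k)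
          = a k * (r:ℂ) ^ k * (ω ^ (e + k)) ^ j := by
        intro j _
        rw [mul_pow, ← pow_mul, ← pow_mul, ← pow_mul]
        have : ω ^ (e * j) * (a k * ((r:ℂ) ^ k * ω ^ (j * k)))
            = a k * (r:ℂ) ^ k * (ω ^ (e * j) * ω ^ (j * k)) := by ring
        rw [this, ← pow_add]
        congr 2
        ring
      rw [Finset.sum_congr rfl h1, ← Finset.mul_sum, hv]
      simp only []
      rw [uroot_geom hm (e + k)]
    rw [hterm] at hS
    have hvn : v n = a n * (r:ℂ) ^ n * (m:ℂ) := by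
      rw [hv]; simp only [if_pos hdvd_en]
    -- norm of S
    have hSnorm : ‖S‖ ≤ m * C := by
      rw [hSdef]
      calc ‖∑ j ∈ Finset.range m, (ω ^ e) ^ j * ∑' k, a k * ((r:ℂ) * ω ^ j) ^ k‖
          ≤ ∑ j ∈ Finset.range m, ‖(ω ^ e) ^ j * ∑' k, a k * ((r:ℂ) * ω ^ j) ^ k‖ :=
            norm_sum_le _ _
        _ ≤ ∑ j ∈ Finset.range m, C := by
            apply Finset.sum_le_sum
            intro j _
            rw [norm_mul, ← pow_mul, norm_pow, uroot_norm, one_pow, one_mul]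
            exact hbd _ (hnormpt j)
        _ = m * C := by rw [Finset.sum_const, Finset.card_range, nsmul_eq_mul]
    -- the updated function
    have hupd0 : HasSum (Function.update v n 0) (0 - v n + S) := hS.update n 0
    have hupd : HasSum (Function.update v n 0) (S - v n) := by
      have : (0:ℂ) - v n + S = S - v n := by ring
      rwa [this] at hupd0
    -- norm bounds on update
    have hub : ∀ k, ‖Function.update v n 0 k‖ ≤ (if m ≤ k then m * f k else 0) := by
      intro k
      by_cases hk : k = n
      · subst hk
        rw [Function.update_self, norm_zero]
        split <;> [exact mul_nonneg (Nat.cast_nonneg m) (hf0 _); exact le_refl 0]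
      · rw [Function.update_of_ne hk]
        by_cases hdvd : m ∣ e + k
        · -- then k ≡ n mod m and k ≠ n so k ≥ m
          have hkm : m ≤ k := by
            by_contra hlt
            push_neg at hlt
            have h1 : (m:ℤ) ∣ ((e:ℤ) + k) - ((e:ℤ) + n) := by
              apply dvd_sub
              · exact_mod_cast hdvd
              · exact_mod_cast hdvd_en
            have h2 : ((e:ℤ) + k) - ((e:ℤ) + n) = (k:ℤ) - n := by ring
            rw [h2] at h1
            obtain ⟨t, ht⟩ := h1
            have hkn : (k:ℤ) ≠ (n:ℤ) := by exact_mod_cast hk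
            have ht0 : t ≠ 0 := by
              rintro rfl
              rw [mul_zero] at ht
              omega
            have h1t : (1:ℤ) ≤ |t| := Int.one_le_abs ht0
            have hmle : (m:ℤ) ≤ |(k:ℤ) - n| := by
              rw [ht, abs_mul, abs_of_nonneg (by positivity : (0:ℤ) ≤ (m:ℤ))]
              nlinarith [h1t, (by exact_mod_cast hm : (0:ℤ) < (m:ℤ))]
            have hmlt : |(k:ℤ) - n| < m := by
              rw [abs_lt]
              constructor <;> omega
            omega
          rw [if_pos hkm, hv]
          simp only [if_pos hdvd]
          rw [norm_mul, norm_mul, Complex.norm_natCast, norm_pow, Complex.norm_real,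
            Real.norm_eq_abs, abs_of_pos hr]
          calc ‖a k‖ * r ^ k * m = m * f k := by rw [hf_def]; ring
            _ ≤ m * f k := le_refl _
        · rw [hv]
          simp only [if_neg hdvd, mul_zero, norm_zero]
          split <;> [exact mul_nonneg (Nat.cast_nonneg m) (hf0 _); exact le_refl 0]
    have hg : Summable (fun k => (if m ≤ k then (m:ℝ) * f k else 0)) := by
      apply Summable.of_nonneg_of_le _ _ (hsum.mul_left (m:ℝ))
      · intro k; split <;> [exact mul_nonneg (Nat.cast_nonneg m) (hf0 _); exact le_refl 0]
      · intro k; split <;> [exact le_refl _; exact mul_nonneg (Nat.cast_nonneg m) (hf0 _)]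
    have hUsum : Summable fun k => ‖Function.update v n 0 k‖ :=
      Summable.of_nonneg_of_le (fun k => norm_nonneg _) hub hg
    have hSvn : ‖S - v n‖ ≤ (m:ℝ) * ∑' k, f (k + m) := by
      rw [← hupd.tsum_eq]
      calc ‖∑' k, Function.update v n 0 k‖ ≤ ∑' k, ‖Function.update v n 0 k‖ :=
            norm_tsum_le_tsum_norm hUsum
        _ ≤ ∑' k, (if m ≤ k then (m:ℝ) * f k else 0) := Summable.tsum_le_tsum hub hUsum hg
        _ ≤ (m:ℝ) * ∑' k, f (k + m) := by
            have hsplit := Summable.sum_add_tsum_nat_add (f := fun k => (if m ≤ k then (m:ℝ) * f k else 0)) m hg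
            have hzero : ∑ i ∈ Finset.range m, (if m ≤ i then (m:ℝ) * f i else 0) = 0 := by
              apply Finset.sum_eq_zero
              intro i hi
              rw [if_neg (by simpa using Finset.mem_range.mp hi)]
            have htaileq : ∀ k : ℕ, (if m ≤ k + m then (m:ℝ) * f (k + m) else 0) = (m:ℝ) * f (k+m) := by
              intro k; rw [if_pos (by omega)]
            rw [← hsplit, hzero, zero_add]
            rw [tsum_congr htaileq, tsum_mul_left]
    -- combine
    have hvnorm : ‖v n‖ = ‖a n‖ * r ^ n * m := by
      rw [hvn, norm_mul, norm_mul, Complex.norm_natCast, norm_pow, Complex.norm_real,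
        Real.norm_eq_abs, abs_of_pos hr]
    have h5 : ‖v n‖ ≤ ‖S‖ + ‖S - v n‖ := by
      simpa [sub_sub_cancel] using norm_sub_le S (S - v n)
    rw [hvnorm] at h5
    have h6 : ‖a n‖ * r ^ n * m ≤ m * C + m * ∑' k, f (k + m) := by
      calc ‖a n‖ * r ^ n * m ≤ ‖S‖ + ‖S - v n‖ := h5
        _ ≤ m * C + m * ∑' k, f (k + m) := add_le_add hSnorm hSvn
    have hmpos : (0:ℝ) < m := by exact_mod_cast hm
    nlinarith [h6]
  -- limit
  have hlim : Tendsto (fun m => C + ∑' k, f (k + m)) atTop (nhds C) := by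
    have := (tail_tendsto hsum).const_add C
    simpa using this
  apply ge_of_tendsto hlim
  filter_upwards [eventually_ge_atTop (n+1)] with m hm
  exact key m (by omega)

end Liouv

namespace Liouv

theorem summable_norm_transfer (a : ℕ → ℂ) (w : ℂ) (r : ℝ) (hr : 0 ≤ r) (h2 : 2 * r ≤ ‖w‖)
    (hS : Summable fun n => a n * w ^ n) : Summable fun n => ‖a n‖ * r ^ n := by
  have hb : BddAbove (Set.range fun n => ‖a n * w ^ n‖) := by
    have h0 := hS.tendsto_atTop_zero
    have h1 : Tendsto (fun n => ‖a n * w ^ n‖) atTop (nhds 0) := by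
      rw [show (0:ℝ) = ‖(0:ℂ)‖ by simp]
      exact h0.norm
    exact h1.bddAbove_range
  obtain ⟨Cb, hCb⟩ := hb
  have hCb' : ∀ n, ‖a n * w ^ n‖ ≤ Cb := fun n => hCb (Set.mem_range_self n)
  have hCb0 : 0 ≤ Cb := le_trans (norm_nonneg _) (hCb' 0)
  apply Summable.of_nonneg_of_le
    (fun n => mul_nonneg (norm_nonneg _) (pow_nonneg hr n))
    (fun n => ?_) ((summable_geometric_of_lt_one (by norm_num) (by norm_num : (1/2:ℝ) < 1)).mul_left Cb)
  have hwn : ‖a n‖ * r ^ n ≤ ‖a n‖ * (‖w‖ * (1/2)) ^ n := by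
    apply mul_le_mul_of_nonneg_left _ (norm_nonneg _)
    apply pow_le_pow_left₀ hr
    linarith
  calc ‖a n‖ * r ^ n ≤ ‖a n‖ * (‖w‖ * (1/2)) ^ n := hwn
    _ = ‖a n * w ^ n‖ * (1/2) ^ n := by rw [norm_mul, norm_pow, mul_pow]; ring
    _ ≤ Cb * (1/2) ^ n := by
        apply mul_le_mul_of_nonneg_right (hCb' n) (by positivity)

/-- Power series package: summability, derivative and continuity of the derivative
on a ball strictly inside the domain of summability. -/
theorem pkg (a : ℕ → ℂ) (r₁ r₂ : ℝ) (h0 : 0 < r₁) (h12 : r₁ < r₂)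
    (hsum : Summable fun n => ‖a n‖ * r₂ ^ n) :
    (∀ w : ℂ, ‖w‖ ≤ r₁ → Summable fun n => ‖a n‖ * ‖w‖ ^ n) ∧
    (∀ t : ℂ, ‖t‖ < r₁ → HasDerivAt (fun y : ℂ => ∑' n, a n * y ^ n)
        (∑' n, a n * ((n:ℂ) * t ^ (n-1))) t) ∧
    (∀ t : ℂ, ‖t‖ < r₁ → ContinuousAt (fun τ : ℂ => ∑' n, a n * ((n:ℂ) * τ ^ (n-1))) t) ∧
    (∀ t : ℂ, ‖t‖ < r₁ → Summable fun n => ‖a n * ((n:ℂ) * t ^ (n-1))‖) := by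
  have hr2 : 0 < r₂ := h0.trans h12
  obtain ⟨Ca, hCa0, hCa⟩ := exists_bound_of_summable hsum
    (fun n => mul_nonneg (norm_nonneg _) (pow_nonneg hr2.le n))
  have hCabound : ∀ n, ‖a n‖ ≤ Ca / r₂ ^ n := fun n =>
    (le_div_iff₀ (pow_pos hr2 n)).2 (hCa n)
  set q : ℝ := r₁ / r₂ with hq
  have hq0 : 0 ≤ q := by positivity
  have hq1 : q < 1 := (div_lt_one hr2).2 h12
  have hqnorm : ‖q‖ < 1 := by rwa [Real.norm_eq_abs, abs_of_nonneg hq0]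
  -- summability of the norms
  have P1 : ∀ w : ℂ, ‖w‖ ≤ r₁ → Summable fun n => ‖a n‖ * ‖w‖ ^ n := by
    intro w hw
    apply Summable.of_nonneg_of_le
      (fun n => mul_nonneg (norm_nonneg _) (pow_nonneg (norm_nonneg _) n)) (fun n => ?_) hsum
    exact mul_le_mul_of_nonneg_left
      (pow_le_pow_left₀ (norm_nonneg _) (le_trans hw (le_trans h12.le (le_refl _))) n)
      (norm_nonneg _)
  refine ⟨P1, ?_⟩
  -- first derivative series bound
  set u₁ : ℕ → ℝ := fun n => (Ca / r₁) * ((n:ℝ) ^ 1 * q ^ n) with hu₁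
  have hu₁S : Summable u₁ :=
    (summable_pow_mul_geometric_of_norm_lt_one 1 hqnorm).mul_left _
  have hu₁b : ∀ (n : ℕ) (y : ℂ), y ∈ Metric.ball (0:ℂ) r₁ → ‖a n * ((n:ℂ) * y ^ (n-1))‖ ≤ u₁ n := by
    intro n y hy
    have hy' : ‖y‖ < r₁ := by simpa using hy
    rcases Nat.eq_zero_or_pos n with rfl | hn
    · simp [hu₁]
    · rw [norm_mul, norm_mul, Complex.norm_natCast, norm_pow]
      calc ‖a n‖ * ((n:ℝ) * ‖y‖ ^ (n-1)) ≤ (Ca / r₂ ^ n) * ((n:ℝ) * r₁ ^ (n-1)) := by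
            apply mul_le_mul (hCabound n) _ (by positivity) (by positivity)
            exact mul_le_mul_of_nonneg_left (pow_le_pow_left₀ (norm_nonneg _) hy'.le _)
              (Nat.cast_nonneg n)
        _ = (Ca / r₁) * ((n:ℝ) ^ 1 * q ^ n) := by
            rw [hq, div_pow]
            have hne : r₁ ≠ 0 := ne_of_gt h0
            have hne2 : r₂ ^ n ≠ 0 := ne_of_gt (pow_pos hr2 n)
            have hpow : r₁ ^ (n - 1) * r₁ = r₁ ^ n := by
              rw [← pow_succ]
              congr 1
              omega
            field_simp
            linear_combination Ca * hpow
    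
  have hderiv : ∀ (n : ℕ) (y : ℂ), y ∈ Metric.ball (0:ℂ) r₁ →
      HasDerivAt (fun x : ℂ => a n * x ^ n) (a n * ((n:ℂ) * y ^ (n-1))) y := fun n y _ =>
    (hasDerivAt_pow n y).const_mul (a n)
  have hsum0 : Summable fun n => a n * (0:ℂ) ^ n := by
    apply summable_of_ne_finset_zero (s := {0})
    intro n hn
    have : n ≠ 0 := by simpa using hn
    simp [zero_pow this]
  have hball : (0:ℂ) ∈ Metric.ball (0:ℂ) r₁ := Metric.mem_ball_self h0
  have P2 : ∀ t : ℂ, ‖t‖ < r₁ → HasDerivAt (fun y : ℂ => ∑' n, a n * y ^ n)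
      (∑' n, a n * ((n:ℂ) * t ^ (n-1))) t := by
    intro t ht
    exact hasDerivAt_tsum_of_isPreconnected hu₁S Metric.isOpen_ball
      (convex_ball (0:ℂ) r₁).isPreconnected hderiv hu₁b hball hsum0 (by simpa using ht)
  refine ⟨P2, ?_⟩
  -- second derivative for continuity
  set u₂ : ℕ → ℝ := fun n => (Ca / r₁ ^ 2) * ((n:ℝ) ^ 2 * q ^ n) with hu₂
  have hu₂S : Summable u₂ :=
    (summable_pow_mul_geometric_of_norm_lt_one 2 hqnorm).mul_left _
  have hderiv2 : ∀ (n : ℕ) (y : ℂ), y ∈ Metric.ball (0:ℂ) r₁ →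
      HasDerivAt (fun x : ℂ => a n * ((n:ℂ) * x ^ (n-1)))
        (a n * (n:ℂ) * (((n:ℕ) - 1 : ℕ) * y ^ (n-1-1))) y := by
    intro n y _
    have := (hasDerivAt_pow (n-1) y).const_mul (a n * (n:ℂ))
    simpa [mul_assoc] using this
  have hu₂b : ∀ (n : ℕ) (y : ℂ), y ∈ Metric.ball (0:ℂ) r₁ →
      ‖a n * (n:ℂ) * (((n:ℕ) - 1 : ℕ) * y ^ (n-1-1))‖ ≤ u₂ n := by
    intro n y hy
    have hy' : ‖y‖ < r₁ := by simpa using hy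
    match n with
    | 0 =>
      simp only [hu₂]
      simp
    | 1 =>
      simp only [hu₂]
      simp
      positivity
    | (k+2) =>
      set n := k + 2
      rw [norm_mul, norm_mul, norm_mul, Complex.norm_natCast, Complex.norm_natCast, norm_pow]
      have h1 : ((n - 1 : ℕ) : ℝ) ≤ (n : ℝ) := Nat.cast_le.mpr (Nat.sub_le n 1)
      have hyn : ‖y‖ ^ (n-1-1) ≤ r₁ ^ (n-2) := by
        rw [show n-1-1 = n-2 from rfl]
        exact pow_le_pow_left₀ (norm_nonneg _) hy'.le _
      calc ‖a n‖ * (n:ℝ) * (((n-1:ℕ):ℝ) * ‖y‖ ^ (n-1-1))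
          ≤ (Ca / r₂ ^ n) * (n:ℝ) * ((n:ℝ) * r₁ ^ (n-2)) := by
            apply mul_le_mul
            · exact mul_le_mul (hCabound n) (le_refl _) (Nat.cast_nonneg n) (by positivity)
            · exact mul_le_mul h1 hyn (by positivity) (Nat.cast_nonneg n)
            · positivity
            · positivity
        _ = (Ca / r₁ ^ 2) * ((n:ℝ) ^ 2 * q ^ n) := by
            rw [hq, div_pow]
            have hne : r₁ ≠ 0 := ne_of_gt h0
            have hne2 : r₂ ^ n ≠ 0 := ne_of_gt (pow_pos hr2 n)
            have hpow : r₁ ^ (n - 2) * r₁ ^ 2 = r₁ ^ n := by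
              rw [← pow_add, show n - 2 + 2 = n from rfl]
            field_simp
            linear_combination (Ca * (n:ℝ)^2) * hpow
    
  constructor
  · intro t ht
    have := hasDerivAt_tsum_of_isPreconnected hu₂S Metric.isOpen_ball
      (convex_ball (0:ℂ) r₁).isPreconnected hderiv2 hu₂b hball ?_ (by simpa using ht)
    · exact this.continuousAt
    · apply summable_of_ne_finset_zero (s := {0, 1})
      intro n hn
      have hn0 : n ≠ 0 ∧ n ≠ 1 := by simpa using hn
      have : n - 1 ≠ 0 := by omega
      simp [zero_pow this]
  · intro t ht
    exact Summable.of_nonneg_of_le (fun n => norm_nonneg _)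
      (fun n => hu₁b n t (by simpa using ht)) hu₁S

end Liouv


open Filter

noncomputable section

namespace Liouv

theorem EvS.of_forall {P : ℝ → Prop} (h : ∀ ε, 0 < ε → ε ≤ 1 → P ε) : EvS P :=
  ⟨1, one_pos, le_refl 1, h⟩

theorem evs_rho (g : Gauge) {δ : ℝ} (hδ : 0 < δ) :
    EvS fun ε => 0 < g.ρ ε ∧ g.ρ ε ≤ 1 ∧ g.ρ ε ≤ δ := by
  have h1 := g.evs_le hδ
  have h2 : EvS fun ε => 0 < g.ρ ε ∧ g.ρ ε ≤ 1 :=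
    EvS.of_forall fun ε a b => ⟨g.pos ε a b, g.le_one ε a b⟩
  exact (h1.and h2).mono fun ε _ _ h => ⟨h.2.1, h.2.2, h.1⟩

variable {g : Gauge} {𝕜 : Type} [RCLike 𝕜]

theorem isRep_mk {x : ℝ → 𝕜} (hx : g.Mod x) : IsRep g x (GQ.mk g x hx) := ⟨hx, rfl⟩

theorem isRep_out (x : GQ g 𝕜) : IsRep g (Quotient.out x).1 x :=
  ⟨(Quotient.out x).2, Quotient.out_eq x⟩

theorem isRep_zero : IsRep g (fun _ => (0:𝕜)) (GQ.zero g 𝕜) := ⟨_, rfl⟩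

theorem isRep_diff_negl {z : GQ g 𝕜} {a b : ℝ → 𝕜} (ha : IsRep g a z) (hb : IsRep g b z) :
    g.Negl fun ε => a ε - b ε := by
  obtain ⟨ha', haeq⟩ := ha
  obtain ⟨hb', hbeq⟩ := hb
  exact Quotient.exact (haeq.trans hbeq.symm)

theorem rep_zero_negl {b : ℝ → 𝕜} (hb : IsRep g b (GQ.zero g 𝕜)) : g.Negl b := by
  have h := isRep_diff_negl hb (isRep_zero (g := g))
  simpa using h

theorem class_eq_of_negl {a b : ℝ → 𝕜} (ha : g.Mod a) (hb : g.Mod b)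
    (h : g.Negl fun ε => a ε - b ε) : GQ.mk g a ha = GQ.mk g b hb := Quotient.sound h

theorem eq_of_reps {x y : GQ g 𝕜} {a b : ℝ → 𝕜} (ha : IsRep g a x) (hb : IsRep g b y)
    (h : g.Negl fun ε => a ε - b ε) : x = y := by
  obtain ⟨ha', haeq⟩ := ha
  obtain ⟨hb', hbeq⟩ := hb
  rw [← haeq, ← hbeq]
  exact Quotient.sound h

theorem negl_of_small {x : ℝ → 𝕜} (C : ℝ)
    (h : ∀ q : ℕ, EvS fun ε => ‖x ε‖ ≤ C * g.ρ ε ^ q) : g.Negl x := by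
  intro q
  have hδ : (0:ℝ) < 1 / (|C| + 1) := by positivity
  refine ((h (q+1)).and (evs_rho g hδ)).mono fun ε hε hε1 hh => ?_
  obtain ⟨h1, hρ0, hρ1, hρδ⟩ := hh
  have hC : C * g.ρ ε ≤ 1 := by
    have h2 : C * g.ρ ε ≤ |C| * g.ρ ε := mul_le_mul_of_nonneg_right (le_abs_self C) hρ0.le
    have h3 : |C| * g.ρ ε ≤ |C| * (1 / (|C| + 1)) := mul_le_mul_of_nonneg_left hρδ (abs_nonneg C)
    have h4 : |C| * (1 / (|C| + 1)) ≤ 1 := by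
      rw [mul_one_div, div_le_one (by positivity)]
      linarith [abs_nonneg C]
    linarith
  calc ‖x ε‖ ≤ C * g.ρ ε ^ (q+1) := h1
    _ = (C * g.ρ ε) * g.ρ ε ^ q := by ring
    _ ≤ 1 * g.ρ ε ^ q := mul_le_mul_of_nonneg_right hC (pow_nonneg hρ0.le q)
    _ = g.ρ ε ^ q := one_mul _

theorem negl_dpow_rep {q : ℕ} {u : ℝ → ℝ} (hu : IsRep g u (g.dpow q)) :
    g.Negl fun ε => u ε - g.ρ ε ^ q :=
  isRep_diff_negl hu (isRep_mk (g.mod_pow q))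

/-- Extract an eventual estimate from `|x - y| < dρ^q`, for arbitrary representatives. -/
theorem absLt_est {x y : GQ g ℂ} {q : ℕ} (h : GQ.absLt g x y (g.dpow q)) {xr yr : ℝ → ℂ}
    (hx : IsRep g xr x) (hy : IsRep g yr y) :
    EvS fun ε => ‖xr ε - yr ε‖ ≤ 2 * g.ρ ε ^ q := by
  obtain ⟨a, b, u, ha, hb, hu, m, hev⟩ := h
  have n1 : g.Negl fun ε => a.1 ε - xr ε := isRep_diff_negl ⟨a.2, ha⟩ hx
  have n2 : g.Negl fun ε => b.1 ε - yr ε := isRep_diff_negl ⟨b.2, hb⟩ hy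
  have n3 : g.Negl fun ε => u.1 ε - g.ρ ε ^ q := negl_dpow_rep ⟨u.2, hu⟩
  refine ((((hev.and (n1 (q+1))).and (n2 (q+1))).and (n3 (q+1))).and
    (evs_rho g (by norm_num : (0:ℝ) < 1/3))).mono fun ε hε hε1 hh => ?_
  obtain ⟨⟨⟨⟨h0, h1⟩, h2⟩, h3⟩, hρ0, hρ1, hρδ⟩ := hh
  have hm : 0 ≤ g.ρ ε ^ m := pow_nonneg hρ0.le m
  have hu3 : u.1 ε ≤ g.ρ ε ^ q + g.ρ ε ^ (q+1) := by
    have h3' : |u.1 ε - g.ρ ε ^ q| ≤ g.ρ ε ^ (q+1) := by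
      simpa [Real.norm_eq_abs] using h3
    have := (abs_le.mp h3').2
    linarith
  have hab : ‖a.1 ε - b.1 ε‖ ≤ g.ρ ε ^ q + g.ρ ε ^ (q+1) := by linarith
  have hstep : ‖xr ε - yr ε‖ ≤ ‖a.1 ε - b.1 ε‖ + ‖a.1 ε - xr ε‖ + ‖b.1 ε - yr ε‖ := by
    have : xr ε - yr ε = (a.1 ε - b.1 ε) - (a.1 ε - xr ε) + (b.1 ε - yr ε) := by ring
    rw [this]
    calc ‖(a.1 ε - b.1 ε) - (a.1 ε - xr ε) + (b.1 ε - yr ε)‖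
        ≤ ‖(a.1 ε - b.1 ε) - (a.1 ε - xr ε)‖ + ‖b.1 ε - yr ε‖ := norm_add_le _ _
      _ ≤ ‖a.1 ε - b.1 ε‖ + ‖a.1 ε - xr ε‖ + ‖b.1 ε - yr ε‖ := by
          have := norm_sub_le (a.1 ε - b.1 ε) (a.1 ε - xr ε)
          linarith
  have h3ρ : 3 * g.ρ ε ^ (q+1) ≤ g.ρ ε ^ q := by
    have : g.ρ ε ^ (q+1) = g.ρ ε * g.ρ ε ^ q := by ring
    rw [this]
    nlinarith [pow_nonneg hρ0.le q]
  calc ‖xr ε - yr ε‖ ≤ ‖a.1 ε - b.1 ε‖ + ‖a.1 ε - xr ε‖ + ‖b.1 ε - yr ε‖ := hstep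
    _ ≤ (g.ρ ε ^ q + g.ρ ε ^ (q+1)) + g.ρ ε ^ (q+1) + g.ρ ε ^ (q+1) := by
        have := h1; have := h2
        gcongr <;> assumption
    _ ≤ 2 * g.ρ ε ^ q := by linarith

theorem absLt_intro {x y : GQ g ℂ} {q : ℕ} {xr yr : ℝ → ℂ} (hx : IsRep g xr x)
    (hy : IsRep g yr y) (h : EvS fun ε => ‖xr ε - yr ε‖ ≤ g.ρ ε ^ (q+1)) :
    GQ.absLt g x y (g.dpow q) := by
  obtain ⟨hxm, hxe⟩ := hx
  obtain ⟨hym, hye⟩ := hy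
  refine ⟨⟨xr, hxm⟩, ⟨yr, hym⟩, ⟨fun ε => g.ρ ε ^ q, g.mod_pow q⟩, hxe, hye, rfl, q+1, ?_⟩
  refine (h.and (evs_rho g (by norm_num : (0:ℝ) < 1/2))).mono fun ε hε hε1 hh => ?_
  obtain ⟨h1, hρ0, hρ1, hρδ⟩ := hh
  have h2 : 2 * g.ρ ε ^ (q+1) ≤ g.ρ ε ^ q := by
    have he : g.ρ ε ^ (q+1) = g.ρ ε * g.ρ ε ^ q := by ring
    rw [he]
    nlinarith [pow_nonneg hρ0.le q]
  linarith

theorem nt_le_refl (n : Nt g) : Nt.le g n n :=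
  ⟨Quotient.out n, Quotient.out n, Quotient.out_eq n, Quotient.out_eq n,
    EvS.of_forall fun _ _ _ => le_refl _⟩

theorem isRep_partialSum (A : ℕ → ℝ → ℂ) (hA : g.SMod A) (N : Nt g) :
    IsRep g (fun ε => ∑ n ∈ Finset.range ((Quotient.out N).1 ε + 1), A n ε)
      (partialSum g A hA N) := by
  refine ⟨hA _ (Quotient.out N).2, ?_⟩
  conv_rhs => rw [← Quotient.out_eq N]
  rfl

theorem hyperLim_transfer {A B : ℕ → ℝ → ℂ} (hA : g.SMod A) (hB : g.SMod B) {l : GQ g ℂ}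
    (hcomp : ∀ q : ℕ, EvS fun ε => ∀ K : ℕ,
      ‖∑ n ∈ Finset.range (K+1), (A n ε - B n ε)‖ ≤ g.ρ ε ^ q)
    (h : HyperLim g (partialSum g A hA) l) : HyperLim g (partialSum g B hB) l := by
  intro q
  obtain ⟨M, hM⟩ := h (q+2)
  refine ⟨M, fun n hn => ?_⟩
  have h1 := absLt_est (hM n hn) (isRep_partialSum A hA n) (isRep_out l)
  apply absLt_intro (isRep_partialSum B hB n) (isRep_out l)
  refine ((h1.and (hcomp (q+2))).and (evs_rho g (by norm_num : (0:ℝ) < 1/3))).mono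
    fun ε hε hε1 hh => ?_
  obtain ⟨⟨ha, hc⟩, hρ0, hρ1, hρδ⟩ := hh
  have hc' := hc ((Quotient.out n).1 ε)
  rw [Finset.sum_sub_distrib] at hc'
  have hstep : ‖(fun ε => ∑ k ∈ Finset.range ((Quotient.out n).1 ε + 1), B k ε) ε
      - (Quotient.out l).1 ε‖ ≤ 3 * g.ρ ε ^ (q+2) := by
    simp only []
    have heq : (∑ k ∈ Finset.range ((Quotient.out n).1 ε + 1), B k ε) - (Quotient.out l).1 ε
        = ((∑ k ∈ Finset.range ((Quotient.out n).1 ε + 1), A k ε) - (Quotient.out l).1 ε)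
          - ((∑ k ∈ Finset.range ((Quotient.out n).1 ε + 1), A k ε)
            - (∑ k ∈ Finset.range ((Quotient.out n).1 ε + 1), B k ε)) := by ring
    rw [heq]
    calc _ ≤ ‖(∑ k ∈ Finset.range ((Quotient.out n).1 ε + 1), A k ε) - (Quotient.out l).1 ε‖
        + ‖(∑ k ∈ Finset.range ((Quotient.out n).1 ε + 1), A k ε)
            - (∑ k ∈ Finset.range ((Quotient.out n).1 ε + 1), B k ε)‖ := norm_sub_le _ _
      _ ≤ 2 * g.ρ ε ^ (q+2) + g.ρ ε ^ (q+2) := add_le_add ha hc'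
      _ = 3 * g.ρ ε ^ (q+2) := by ring
  refine le_trans hstep ?_
  have he : g.ρ ε ^ (q+2) = g.ρ ε * g.ρ ε ^ (q+1) := by ring
  rw [he]
  nlinarith [pow_nonneg hρ0.le (q+1)]

theorem hyperLim_unique {s : Nt g → GQ g ℂ} {l l' : GQ g ℂ}
    (h : HyperLim g s l) (h' : HyperLim g s l') : l = l' := by
  apply eq_of_reps (isRep_out l) (isRep_out l')
  apply negl_of_small 4
  intro q
  obtain ⟨M, hM⟩ := h q
  obtain ⟨M', hM'⟩ := h' q
  -- use the max of the two indices
  set mnet : ℝ → ℕ := fun ε => max ((Quotient.out M).1 ε) ((Quotient.out M').1 ε) with hmnet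
  have hmmod : g.NMod mnet := by
    have h1 : g.NMod fun ε => (Quotient.out M).1 ε + (Quotient.out M').1 ε :=
      (Quotient.out M).2.add (Quotient.out M').2
    exact h1.mono fun ε => by simp only [hmnet]; omega
  set K : Nt g := Nt.mk g mnet hmmod with hK
  have hle1 : Nt.le g M K := by
    refine ⟨Quotient.out M, ⟨mnet, hmmod⟩, Quotient.out_eq M, rfl, ?_⟩
    exact EvS.of_forall fun ε _ _ => le_max_left _ _
  have hle2 : Nt.le g M' K := by
    refine ⟨Quotient.out M', ⟨mnet, hmmod⟩, Quotient.out_eq M', rfl, ?_⟩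
    exact EvS.of_forall fun ε _ _ => le_max_right _ _
  have e1 := absLt_est (hM K hle1) (isRep_out (s K)) (isRep_out l)
  have e2 := absLt_est (hM' K hle2) (isRep_out (s K)) (isRep_out l')
  refine (e1.and e2).mono fun ε hε hε1 hh => ?_
  obtain ⟨h1, h2⟩ := hh
  have : (Quotient.out l).1 ε - (Quotient.out l').1 ε
      = ((Quotient.out (s K)).1 ε - (Quotient.out l').1 ε)
        - ((Quotient.out (s K)).1 ε - (Quotient.out l).1 ε) := by ring
  rw [this]
  calc _ ≤ ‖(Quotient.out (s K)).1 ε - (Quotient.out l').1 ε‖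
      + ‖(Quotient.out (s K)).1 ε - (Quotient.out l).1 ε‖ := norm_sub_le _ _
    _ ≤ 2 * g.ρ ε ^ q + 2 * g.ρ ε ^ q := add_le_add h2 h1
    _ = 4 * g.ρ ε ^ q := by ring

theorem hyperLim_eq_of_close {A : ℕ → ℝ → ℂ} (hA : g.SMod A) {l : GQ g ℂ}
    (h : HyperLim g (partialSum g A hA) l) {c : ℝ → ℂ} (hc : g.Mod c)
    (hclose : ∀ q : ℕ, EvS fun ε => ∀ K : ℕ,
      ‖(∑ n ∈ Finset.range (K+1), A n ε) - c ε‖ ≤ g.ρ ε ^ q) : l = GQ.mk g c hc := by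
  apply eq_of_reps (isRep_out l) (isRep_mk hc)
  apply negl_of_small 3
  intro q
  obtain ⟨M, hM⟩ := h q
  have e1 := absLt_est (hM M (nt_le_refl M)) (isRep_partialSum A hA M) (isRep_out l)
  refine (e1.and (hclose q)).mono fun ε hε hε1 hh => ?_
  obtain ⟨h1, h2⟩ := hh
  have h2' := h2 ((Quotient.out M).1 ε)
  have : (Quotient.out l).1 ε - c ε
      = ((∑ n ∈ Finset.range ((Quotient.out M).1 ε + 1), A n ε) - c ε)
        - ((∑ n ∈ Finset.range ((Quotient.out M).1 ε + 1), A n ε) - (Quotient.out l).1 ε) := by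
    ring
  rw [this]
  calc _ ≤ ‖(∑ n ∈ Finset.range ((Quotient.out M).1 ε + 1), A n ε) - c ε‖
      + ‖(∑ n ∈ Finset.range ((Quotient.out M).1 ε + 1), A n ε) - (Quotient.out l).1 ε‖ :=
        norm_sub_le _ _
    _ ≤ g.ρ ε ^ q + 2 * g.ρ ε ^ q := add_le_add h2' h1
    _ = 3 * g.ρ ε ^ q := by ring

end Liouv


open Filter

noncomputable section

namespace Liouv

theorem taylor_hasSum {f : ℂ → ℂ} (hf : Differentiable ℂ f) (z : ℂ) :
    HasSum (fun n => (iteratedDeriv n f 0 / (n.factorial : ℂ)) * z ^ n) (f z) := by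
  have h := Complex.hasSum_taylorSeries_of_entire hf 0 z
  have heq : (fun n : ℕ => (n.factorial : ℂ)⁻¹ • (z - 0) ^ n • iteratedDeriv n f 0)
      = fun n => (iteratedDeriv n f 0 / (n.factorial : ℂ)) * z ^ n := by
    funext n
    rw [sub_zero, smul_eq_mul, smul_eq_mul, div_eq_mul_inv]
    ring
  rwa [heq] at h

theorem sum_head_split (h : ℕ → ℂ) (d : ℕ) :
    ∑ n ∈ Finset.range (d+1), h n = h 0 + ∑ n ∈ Finset.Icc 1 d, h n := by
  induction d with
  | zero => simp
  | succ d ih =>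
    rw [Finset.sum_range_succ, ih, Finset.sum_Icc_succ_top (by omega : 1 ≤ d + 1)]
    ring

/-- Master Cauchy estimate: `‖A n ε‖ ≤ Mr ε * (ρ ε ^ N) ^ n` for ε small. -/
theorem masterE (g : Gauge) (f : ℝ → ℂ → ℂ) (hent : ∀ ε : ℝ, Differentiable ℂ (f ε))
    (Mr : ℝ → ℝ)
    (hbound : ∀ N : ℕ, EvS fun ε => ∀ w : ℂ, ‖w‖ ≤ g.ρ ε ^ (-(N : ℤ)) → ‖f ε w‖ ≤ Mr ε)
    (N : ℕ) :
    EvS fun ε => ∀ n : ℕ,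
      ‖iteratedDeriv n (f ε) 0 / (n.factorial : ℂ)‖ ≤ Mr ε * (g.ρ ε ^ N) ^ n := by
  refine ((hbound N).and (evs_rho g one_pos)).mono fun ε hε hε1 hh => ?_
  obtain ⟨hb, hρ0, hρ1, _⟩ := hh
  set a : ℕ → ℂ := fun n => iteratedDeriv n (f ε) 0 / (n.factorial : ℂ) with ha
  set r : ℝ := (g.ρ ε ^ N)⁻¹ with hr_def
  have hrpos : 0 < r := by positivity
  have hzr : g.ρ ε ^ (-(N:ℤ)) = r := by
    rw [hr_def, zpow_neg, zpow_natCast]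
  -- summability of norms at radius r
  have hsum : Summable fun n => ‖a n‖ * r ^ n := by
    apply summable_norm_transfer a (((2*r : ℝ) : ℂ)) r hrpos.le
    · rw [Complex.norm_real, Real.norm_eq_abs, abs_of_pos (by positivity)]
    · exact (taylor_hasSum (hent ε) _).summable
  have hbd : ∀ w : ℂ, ‖w‖ = r → ‖∑' n, a n * w ^ n‖ ≤ Mr ε := by
    intro w hw
    rw [(taylor_hasSum (hent ε) w).tsum_eq]
    exact hb w (by rw [hzr, hw])
  have hcb := coeff_bound a r (Mr ε) hrpos hsum hbd
  intro n
  have h1 := hcb n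
  have h2 : r ^ n * (g.ρ ε ^ N) ^ n = 1 := by
    rw [hr_def, ← mul_pow, inv_mul_cancel₀ (by positivity : (g.ρ ε ^ N) ≠ 0), one_pow]
  calc ‖a n‖ = ‖a n‖ * r ^ n * (g.ρ ε ^ N) ^ n := by
        rw [mul_assoc, h2, mul_one]
    _ ≤ Mr ε * (g.ρ ε ^ N) ^ n :=
        mul_le_mul_of_nonneg_right h1 (by positivity)

end Liouv


open Filter

noncomputable section

namespace Liouv

variable {g : Gauge}

section parts123

variable (g : Gauge) (f : ℝ → ℂ → ℂ) (hent : ∀ ε : ℝ, Differentiable ℂ (f ε))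
    (Mr : ℝ → ℝ) (hMmod : g.Mod Mr)
    (hbound : ∀ N : ℕ, EvS fun ε => ∀ w : ℂ, ‖w‖ ≤ g.ρ ε ^ (-(N : ℤ)) → ‖f ε w‖ ≤ Mr ε)
    (A : ℕ → ℝ → ℂ) (hAdef : A = fun n ε => iteratedDeriv n (f ε) 0 / (n.factorial : ℂ))

include hent hbound hAdef

theorem masterE' (N : ℕ) :
    EvS fun ε => ∀ n : ℕ, ‖A n ε‖ ≤ Mr ε * (g.ρ ε ^ N) ^ n := by
  subst hAdef
  exact masterE g f hent Mr hbound N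

include hMmod

theorem part1 : g.WMod A := by
  obtain ⟨R₀, hR₀⟩ := id hMmod
  refine ⟨0, R₀, ((masterE' g f hent Mr hbound A hAdef 0).and hR₀).mono
    fun ε hε hε1 hh n => ?_⟩
  obtain ⟨h1, h2⟩ := hh
  have h3 := h1 n
  rw [pow_zero, one_pow, mul_one] at h3
  have h4 : Mr ε ≤ ‖Mr ε‖ := le_abs_self _
  have : (n * 0 + R₀ : ℕ) = R₀ := by omega
  rw [this]
  exact h3.trans (h4.trans h2)

theorem part2 (Nr : ℝ → ℕ) (hNr1 : EvS fun ε => 1 ≤ Nr ε) :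
    g.Negl fun ε => A (Nr ε) ε := by
  obtain ⟨R₀, hR₀⟩ := id hMmod
  intro q
  refine ((((masterE' g f hent Mr hbound A hAdef (q + R₀ + 1)).and hR₀).and hNr1).and
    (evs_rho g (by norm_num : (0:ℝ) < 1/2))).mono fun ε hε hε1 hh => ?_
  obtain ⟨⟨⟨h1, h2⟩, h3⟩, hρ0, hρ1, hρ2⟩ := hh
  have hb := h1 (Nr ε)
  have hxN : (0:ℝ) ≤ g.ρ ε ^ (q + R₀ + 1) := by positivity
  have hxN1 : g.ρ ε ^ (q + R₀ + 1) ≤ 1 := pow_le_one₀ hρ0.le hρ1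
  have hpow : (g.ρ ε ^ (q + R₀ + 1)) ^ (Nr ε) ≤ (g.ρ ε ^ (q + R₀ + 1)) ^ 1 :=
    pow_le_pow_of_le_one hxN hxN1 h3
  rw [pow_one] at hpow
  have hMr0 : 0 ≤ Mr ε := by
    have := h1 0
    simpa using le_trans (norm_nonneg _) this
  have hzp : g.ρ ε ^ (-(R₀:ℤ)) = (g.ρ ε ^ R₀)⁻¹ := by rw [zpow_neg, zpow_natCast]
  have h2' : Mr ε ≤ (g.ρ ε ^ R₀)⁻¹ := by
    rw [← hzp]
    exact le_trans (le_abs_self _) ((Real.norm_eq_abs _) ▸ h2)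
  calc ‖A (Nr ε) ε‖ ≤ Mr ε * (g.ρ ε ^ (q + R₀ + 1)) ^ (Nr ε) := hb
    _ ≤ (g.ρ ε ^ R₀)⁻¹ * g.ρ ε ^ (q + R₀ + 1) := by
        apply mul_le_mul h2' hpow (by positivity) (by positivity)
    _ ≤ g.ρ ε ^ q := by
        have hne : g.ρ ε ^ R₀ ≠ 0 := by positivity
        have : g.ρ ε ^ (q + R₀ + 1) = g.ρ ε ^ q * g.ρ ε ^ R₀ * g.ρ ε := by
          rw [← pow_add, ← pow_succ]
        rw [this]
        have hρq : (0:ℝ) ≤ g.ρ ε ^ q := by positivity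
        calc (g.ρ ε ^ R₀)⁻¹ * (g.ρ ε ^ q * g.ρ ε ^ R₀ * g.ρ ε)
            = g.ρ ε ^ q * g.ρ ε := by field_simp
          _ ≤ g.ρ ε ^ q * 1 := mul_le_mul_of_nonneg_left hρ1 hρq
          _ = g.ρ ε ^ q := mul_one _

theorem partialSums_smod {zr : ℝ → ℂ} (hzr : g.Mod zr) :
    g.SMod fun n ε => A n ε * zr ε ^ n := by
  obtain ⟨R₀, hR₀⟩ := id hMmod
  obtain ⟨K, hK⟩ := hzr
  intro Nr hNr
  refine ⟨R₀ + 1, ((((masterE' g f hent Mr hbound A hAdef (K+1)).and hR₀).and hK).and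
    (evs_rho g (by norm_num : (0:ℝ) < 1/2))).mono fun ε hε hε1 hh => ?_⟩
  obtain ⟨⟨⟨h1, h2⟩, h3⟩, hρ0, hρ1, hρ2⟩ := hh
  have hMr0 : 0 ≤ Mr ε := by
    have := h1 0
    simpa using le_trans (norm_nonneg _) this
  have hzk : ‖zr ε‖ ≤ (g.ρ ε ^ K)⁻¹ := by
    have : g.ρ ε ^ (-(K:ℤ)) = (g.ρ ε ^ K)⁻¹ := by rw [zpow_neg, zpow_natCast]
    rwa [this] at h3
  have hterm : ∀ k : ℕ, ‖A k ε * zr ε ^ k‖ ≤ Mr ε * g.ρ ε ^ k := by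
    intro k
    rw [norm_mul, norm_pow]
    calc ‖A k ε‖ * ‖zr ε‖ ^ k ≤ (Mr ε * (g.ρ ε ^ (K+1)) ^ k) * ((g.ρ ε ^ K)⁻¹) ^ k := by
          apply mul_le_mul (h1 k) (pow_le_pow_left₀ (norm_nonneg _) hzk k)
            (by positivity) (by positivity)
      _ = Mr ε * g.ρ ε ^ k := by
          have hne : g.ρ ε ^ K ≠ 0 := by positivity
          rw [mul_assoc, ← mul_pow]
          congr 2
          rw [pow_succ, mul_comm (g.ρ ε ^ K) (g.ρ ε), mul_assoc,
            mul_inv_cancel₀ hne, mul_one]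
  calc ‖∑ n ∈ Finset.range (Nr ε + 1), A n ε * zr ε ^ n‖
      ≤ ∑ n ∈ Finset.range (Nr ε + 1), ‖A n ε * zr ε ^ n‖ := norm_sum_le _ _
    _ ≤ ∑ n ∈ Finset.range (Nr ε + 1), Mr ε * g.ρ ε ^ n :=
        Finset.sum_le_sum fun n _ => hterm n
    _ = Mr ε * ∑ n ∈ Finset.range (Nr ε + 1), g.ρ ε ^ n := by rw [Finset.mul_sum]
    _ ≤ Mr ε * 2 := mul_le_mul_of_nonneg_left (sum_range_pow_le hρ0.le hρ2 _) hMr0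
    _ ≤ (g.ρ ε ^ R₀)⁻¹ * 2 := by
        apply mul_le_mul_of_nonneg_right _ (by norm_num)
        have : g.ρ ε ^ (-(R₀:ℤ)) = (g.ρ ε ^ R₀)⁻¹ := by rw [zpow_neg, zpow_natCast]
        rw [← this]
        exact le_trans (le_abs_self _) ((Real.norm_eq_abs _) ▸ h2)
    _ ≤ g.ρ ε ^ (-((R₀+1:ℕ):ℤ)) := by
        have h4 : g.ρ ε ^ (-((R₀+1:ℕ):ℤ)) = (g.ρ ε ^ R₀)⁻¹ * (g.ρ ε)⁻¹ := by
          rw [zpow_neg, zpow_natCast, pow_succ, mul_inv]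
        rw [h4]
        apply mul_le_mul_of_nonneg_left _ (by positivity)
        rw [show (2:ℝ) = (1/2 : ℝ)⁻¹ by norm_num]
        apply inv_anti₀ hρ0 hρ2

theorem hA0 : ∀ ε, A 0 ε = f ε 0 := by
  subst hAdef
  intro ε
  simp [iteratedDeriv_zero]

theorem h0mod : g.Mod fun ε => f ε 0 := by
  obtain ⟨R₀, hR₀⟩ := id hMmod
  refine ⟨R₀, (((hbound 0).and hR₀).and (evs_rho g one_pos)).mono fun ε hε hε1 hh => ?_⟩
  obtain ⟨⟨h1, h2⟩, hρ0, hρ1, _⟩ := hh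
  have := h1 0 (by simp)
  exact le_trans this (le_trans (le_abs_self _) ((Real.norm_eq_abs _) ▸ h2))

theorem part3 {z : Ct g} {zr : ℝ → ℂ} (hzrep : IsRep g zr z) :
    ∃ hS : g.SMod fun n ε => A n ε * zr ε ^ n, ∃ h0 : g.Mod fun ε => f ε 0,
      HSConv g (fun n ε => A n ε * zr ε ^ n) hS (GQ.mk g _ h0) := by
  obtain ⟨hzr, _⟩ := hzrep
  refine ⟨partialSums_smod g f hent Mr hMmod hbound A hAdef hzr,
    h0mod g f hent Mr hMmod hbound A hAdef, ?_⟩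
  obtain ⟨R₀, hR₀⟩ := id hMmod
  obtain ⟨K, hK⟩ := hzr
  intro q
  refine ⟨Nt.mk g (fun _ => 0) (g.nmod_const 0), fun n _ => ?_⟩
  apply absLt_intro (isRep_partialSum _ _ n)
    (isRep_mk (h0mod g f hent Mr hMmod hbound A hAdef))
  refine ((((masterE' g f hent Mr hbound A hAdef (K + R₀ + q + 2)).and hR₀).and hK).and
    (evs_rho g (by norm_num : (0:ℝ) < 1/2))).mono fun ε hε hε1 hh => ?_
  obtain ⟨⟨⟨h1, h2⟩, h3⟩, hρ0, hρ1, hρ2⟩ := hh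
  have hMr0 : 0 ≤ Mr ε := by
    have := h1 0
    simpa using le_trans (norm_nonneg _) this
  have hzk : ‖zr ε‖ ≤ (g.ρ ε ^ K)⁻¹ := by
    have : g.ρ ε ^ (-(K:ℤ)) = (g.ρ ε ^ K)⁻¹ := by rw [zpow_neg, zpow_natCast]
    rwa [this] at h3
  set d := (Quotient.out n).1 ε with hd
  have hsplit := sum_head_split (fun k => A k ε * zr ε ^ k) d
  have hA0' : A 0 ε * zr ε ^ 0 = f ε 0 := by
    rw [pow_zero, mul_one, hA0 g f hent Mr hMmod hbound A hAdef]
  have hterm : ∀ k : ℕ, ‖A k ε * zr ε ^ k‖ ≤ Mr ε * (g.ρ ε ^ (R₀ + q + 2)) ^ k := by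
    intro k
    rw [norm_mul, norm_pow]
    calc ‖A k ε‖ * ‖zr ε‖ ^ k
        ≤ (Mr ε * (g.ρ ε ^ (K + (R₀+q+2))) ^ k) * ((g.ρ ε ^ K)⁻¹) ^ k := by
          apply mul_le_mul _ (pow_le_pow_left₀ (norm_nonneg _) hzk k) (by positivity)
            (by positivity)
          have : K + R₀ + q + 2 = K + (R₀ + q + 2) := by omega
          rw [← this]
          exact h1 k
      _ = Mr ε * (g.ρ ε ^ (R₀+q+2)) ^ k := by
          have hne : g.ρ ε ^ K ≠ 0 := by positivity
          rw [mul_assoc, ← mul_pow]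
          congr 2
          rw [pow_add, mul_comm (g.ρ ε ^ K) _, mul_assoc, mul_inv_cancel₀ hne, mul_one]
  have hx0 : (0:ℝ) ≤ g.ρ ε ^ (R₀+q+2) := by positivity
  have hx2 : g.ρ ε ^ (R₀+q+2) ≤ 1/2 := by
    calc g.ρ ε ^ (R₀+q+2) ≤ g.ρ ε ^ 1 := pow_le_pow_of_le_one hρ0.le hρ1 (by omega)
      _ ≤ 1/2 := by rwa [pow_one]
  have hmain : ‖(∑ k ∈ Finset.range (d+1), A k ε * zr ε ^ k) - f ε 0‖
      ≤ Mr ε * (2 * g.ρ ε ^ (R₀+q+2)) := by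
    rw [hsplit, hA0']
    have : f ε 0 + (∑ k ∈ Finset.Icc 1 d, A k ε * zr ε ^ k) - f ε 0
        = ∑ k ∈ Finset.Icc 1 d, A k ε * zr ε ^ k := by ring
    rw [this]
    calc ‖∑ k ∈ Finset.Icc 1 d, A k ε * zr ε ^ k‖
        ≤ ∑ k ∈ Finset.Icc 1 d, ‖A k ε * zr ε ^ k‖ := norm_sum_le _ _
      _ ≤ ∑ k ∈ Finset.Icc 1 d, Mr ε * (g.ρ ε ^ (R₀+q+2)) ^ k :=
          Finset.sum_le_sum fun k _ => hterm k
      _ = Mr ε * ∑ k ∈ Finset.Icc 1 d, (g.ρ ε ^ (R₀+q+2)) ^ k := by rw [Finset.mul_sum]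
      _ ≤ Mr ε * (2 * (g.ρ ε ^ (R₀+q+2)) ^ 1) :=
          mul_le_mul_of_nonneg_left (sum_Icc_pow_le hx0 hx2 1 d) hMr0
      _ = Mr ε * (2 * g.ρ ε ^ (R₀+q+2)) := by rw [pow_one]
  refine le_trans hmain ?_
  have h2' : Mr ε ≤ (g.ρ ε ^ R₀)⁻¹ := by
    have : g.ρ ε ^ (-(R₀:ℤ)) = (g.ρ ε ^ R₀)⁻¹ := by rw [zpow_neg, zpow_natCast]
    rw [← this]
    exact le_trans (le_abs_self _) ((Real.norm_eq_abs _) ▸ h2)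
  have hne : g.ρ ε ^ R₀ ≠ 0 := by positivity
  calc Mr ε * (2 * g.ρ ε ^ (R₀+q+2))
      ≤ (g.ρ ε ^ R₀)⁻¹ * (2 * g.ρ ε ^ (R₀+q+2)) := by
        apply mul_le_mul_of_nonneg_right h2' (by positivity)
    _ = 2 * g.ρ ε * g.ρ ε ^ (q+1) := by
        rw [show R₀+q+2 = R₀ + (q+1) + 1 by omega]
        field_simp
        ring
    _ ≤ 1 * g.ρ ε ^ (q+1) := by
        apply mul_le_mul_of_nonneg_right _ (by positivity)
        linarith
    _ = g.ρ ε ^ (q+1) := one_mul _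

end parts123

end Liouv


open Filter

noncomputable section

namespace Liouv

theorem summable_of_eventually_le_geom {f : ℕ → ℝ} (h0 : ∀ n, 0 ≤ f n) {x : ℝ}
    (hx0 : 0 ≤ x) (hx1 : x < 1) {n₀ : ℕ} (h : ∀ n, n₀ ≤ n → f n ≤ x ^ n) : Summable f := by
  rw [← summable_nat_add_iff n₀]
  apply Summable.of_nonneg_of_le (fun n => h0 _) (fun n => h (n + n₀) (by omega))
  have : Summable fun n : ℕ => x ^ (n + n₀) := by
    simp_rw [pow_add]
    exact (summable_geometric_of_lt_one hx0 hx1).mul_right _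
  exact this

theorem tsum_diff_bound {x y : ℕ → ℂ} {b : ℕ → ℝ} (hx : Summable x) (hy : Summable y)
    (hb : Summable b) (h : ∀ n, ‖x n - y n‖ ≤ b n) :
    ‖(∑' n, x n) - ∑' n, y n‖ ≤ ∑' n, b n := by
  rw [← Summable.tsum_sub hx hy]
  have hs : Summable fun n => ‖x n - y n‖ :=
    Summable.of_nonneg_of_le (fun n => norm_nonneg _) h hb
  exact (norm_tsum_le_tsum_norm hs).trans (Summable.tsum_le_tsum h hs hb)

section perEps

variable (a : ℕ → ℂ) (ρε : ℝ) (N : ℕ) (hρ0 : 0 < ρε) (hρ4 : ρε ≤ 1/4)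
  (hsu : Summable fun n => ‖a n‖ * ((ρε ^ (N+2))⁻¹) ^ n)

include hρ0 hρ4 hsu

theorem radii_facts : 0 < (ρε ^ N)⁻¹ ∧ (ρε ^ N)⁻¹ + 1 < (ρε ^ (N+1))⁻¹ ∧
    (ρε ^ (N+1))⁻¹ < (ρε ^ (N+2))⁻¹ := by
  have h1 : (0:ℝ) < ρε ^ N := by positivity
  have h1' : (0:ℝ) < ρε ^ (N+1) := by positivity
  have hNle : ρε ^ N ≤ 1 := pow_le_one₀ hρ0.le (by linarith)
  have hinv1 : (1:ℝ) ≤ (ρε ^ N)⁻¹ := by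
    rw [le_inv_comm₀ one_pos h1]
    simpa using hNle
  refine ⟨by positivity, ?_, ?_⟩
  · have he : (ρε ^ (N+1))⁻¹ = (ρε ^ N)⁻¹ * ρε⁻¹ := by
      rw [pow_succ, mul_inv]
    rw [he]
    have h4 : (4:ℝ) ≤ ρε⁻¹ := by
      rw [le_inv_comm₀ (by norm_num) hρ0]
      linarith
    nlinarith [hinv1]
  · have he : (ρε ^ (N+2))⁻¹ = (ρε ^ (N+1))⁻¹ * ρε⁻¹ := by
      rw [pow_succ, mul_inv]
    rw [he]
    have h4 : (4:ℝ) ≤ ρε⁻¹ := by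
      rw [le_inv_comm₀ (by norm_num) hρ0]
      linarith
    have hinv1' : (1:ℝ) ≤ (ρε ^ (N+1))⁻¹ := by
      rw [le_inv_comm₀ one_pos h1']
      simpa using pow_le_one₀ hρ0.le (by linarith : ρε ≤ 1)
    nlinarith

theorem sphere_max : ∃ t : ℂ, ‖t‖ = (ρε ^ N)⁻¹ ∧
    ∀ w : ℂ, ‖w‖ = (ρε ^ N)⁻¹ → ‖∑' n, a n * w ^ n‖ ≤ ‖∑' n, a n * t ^ n‖ := by
  obtain ⟨hr0, hr1, hr12⟩ := radii_facts a ρε N hρ0 hρ4 hsu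
  obtain ⟨_, hD, _, _⟩ := pkg a ((ρε ^ (N+1))⁻¹) ((ρε ^ (N+2))⁻¹) (by positivity) hr12 hsu
  set r : ℝ := (ρε ^ N)⁻¹ with hr
  have hcont : ContinuousOn (fun w : ℂ => ‖∑' n, a n * w ^ n‖) (Metric.sphere (0:ℂ) r) := by
    intro w hw
    have hwn : ‖w‖ = r := by simpa [Complex.dist_eq] using hw
    have : ‖w‖ < (ρε ^ (N+1))⁻¹ := by rw [hwn]; linarith
    exact ((hD w this).continuousAt.norm).continuousWithinAt
  have hne : (Metric.sphere (0:ℂ) r).Nonempty := NormedSpace.sphere_nonempty.mpr hr0.le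
  obtain ⟨t, htmem, hmax⟩ := (isCompact_sphere (0:ℂ) r).exists_isMaxOn hne hcont
  refine ⟨t, by simpa [Complex.dist_eq] using htmem, fun w hw => ?_⟩
  exact hmax (by simpa [Complex.dist_eq] using hw)

theorem seg_max (x y : ℂ) (hx : ‖x‖ ≤ (ρε ^ N)⁻¹) (hy : ‖y‖ ≤ (ρε ^ N)⁻¹ + 1) :
    ∃ τ : ℂ, ‖τ - x‖ ≤ ‖y - x‖ ∧
      ‖(∑' n, a n * y ^ n) - ∑' n, a n * x ^ n‖
        ≤ ‖∑' n, a n * ((n:ℂ) * τ ^ (n-1))‖ * ‖y - x‖ := by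
  obtain ⟨hr0, hr1, hr12⟩ := radii_facts a ρε N hρ0 hρ4 hsu
  obtain ⟨_, hD, hDC, _⟩ := pkg a ((ρε ^ (N+1))⁻¹) ((ρε ^ (N+2))⁻¹) (by positivity) hr12 hsu
  set r₁ : ℝ := (ρε ^ (N+1))⁻¹ with hr₁
  have hxball : x ∈ Metric.ball (0:ℂ) r₁ := by
    simp only [Metric.mem_ball, Complex.dist_eq, sub_zero]
    calc ‖x‖ = ‖x‖ := rfl
      _ < r₁ := by linarith
  have hyball : y ∈ Metric.ball (0:ℂ) r₁ := by
    simp only [Metric.mem_ball, Complex.dist_eq, sub_zero]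
    calc ‖y‖ = ‖y‖ := rfl
      _ < r₁ := by linarith
  have hseg : segment ℝ x y ⊆ Metric.ball (0:ℂ) r₁ :=
    (convex_ball (0:ℂ) r₁).segment_subset hxball hyball
  have hsegball : ∀ σ ∈ segment ℝ x y, ‖σ‖ < r₁ := by
    intro σ hσ
    have := hseg hσ
    simpa [Complex.dist_eq] using this
  -- compactness of the segment
  have hcomp : IsCompact (segment ℝ x y) := by
    rw [segment_eq_image']
    exact (isCompact_Icc).image (by continuity)
  have hne : (segment ℝ x y).Nonempty := ⟨x, left_mem_segment ℝ x y⟩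
  have hcont : ContinuousOn (fun τ : ℂ => ‖∑' n, a n * ((n:ℂ) * τ ^ (n-1))‖) (segment ℝ x y) :=
    fun σ hσ => ((hDC σ (hsegball σ hσ)).norm).continuousWithinAt
  obtain ⟨τ, hτmem, hmax⟩ := hcomp.exists_isMaxOn hne hcont
  refine ⟨τ, ?_, ?_⟩
  · rw [segment_eq_image'] at hτmem
    obtain ⟨θ, hθ, hτ⟩ := hτmem
    rw [← hτ]
    have : x + θ • (y - x) - x = θ • (y - x) := by abel
    rw [this, norm_smul, Real.norm_eq_abs, abs_of_nonneg hθ.1]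
    calc θ * ‖y - x‖ ≤ 1 * ‖y - x‖ :=
          mul_le_mul_of_nonneg_right hθ.2 (norm_nonneg _)
      _ = ‖y - x‖ := one_mul _
  · apply Convex.norm_image_sub_le_of_norm_hasDerivWithin_le
      (f' := fun σ => ∑' n, a n * ((n:ℂ) * σ ^ (n-1)))
      (fun σ hσ => (hD σ (hsegball σ hσ)).hasDerivWithinAt)
      (fun σ hσ => hmax hσ) (convex_segment x y)
      (left_mem_segment ℝ x y) (right_mem_segment ℝ x y)

end perEps

end Liouv

namespace Liouv

variable {g : Gauge}

theorem radfact (A' : ℕ → ℝ → ℂ) (hcs : convSet g A' (GQ.zero g ℂ) = Set.univ) (N : ℕ) :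
    EvS fun ε => ∃ n₀ : ℕ, ∀ n, n₀ ≤ n → ‖A' n ε‖ ≤ (g.ρ ε ^ N) ^ n := by
  have hζmod : g.Mod (fun ε => (((g.ρ ε ^ (N+3))⁻¹ : ℝ) : ℂ)) := by
    refine ⟨N+3, EvS.of_forall fun ε h1 h2 => ?_⟩
    have hρ0 := g.pos ε h1 h2
    rw [Complex.norm_real, Real.norm_eq_abs, abs_of_pos (by positivity), zpow_neg, zpow_natCast]
  have hmem : GQ.mk g _ hζmod ∈ convSet g A' (GQ.zero g ℂ) := by rw [hcs]; trivial
  obtain ⟨⟨zr, cr, a'', hzr, hcr, hW2, hSE2, m, hev⟩, _⟩ := hmem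
  have n1 : g.Negl fun ε => zr ε - (((g.ρ ε ^ (N+3))⁻¹ : ℝ) : ℂ) :=
    isRep_diff_negl hzr (isRep_mk hζmod)
  have n2 := rep_zero_negl hcr
  have hSE2' := hSE2 (N+1) 0
  refine ((((hev.and (n1 1)).and (n2 1)).and hSE2').and
    (evs_rho g (by norm_num : (0:ℝ) < 1/4))).mono fun ε hε hε1 hh => ?_
  obtain ⟨⟨⟨⟨h0, h1⟩, h2⟩, h3⟩, hρ0, hρ1, hρ4⟩ := hh
  -- real lower bound for ‖zr - cr‖
  have hinv2 : (1:ℝ) ≤ (g.ρ ε ^ (N+2))⁻¹ := by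
    rw [le_inv_comm₀ one_pos (by positivity)]
    simpa using pow_le_one₀ hρ0.le hρ1
  have hzc : (g.ρ ε ^ (N+2))⁻¹ ≤ ‖zr ε - cr ε‖ + g.ρ ε ^ m := by
    have heq : -(zr ε - (((g.ρ ε ^ (N+3))⁻¹ : ℝ) : ℂ)) + (zr ε - cr ε) + cr ε
        = (((g.ρ ε ^ (N+3))⁻¹ : ℝ) : ℂ) := by ring
    have htri : ‖-(zr ε - (((g.ρ ε ^ (N+3))⁻¹ : ℝ) : ℂ)) + (zr ε - cr ε) + cr ε‖
        ≤ ‖-(zr ε - (((g.ρ ε ^ (N+3))⁻¹ : ℝ) : ℂ))‖ + ‖zr ε - cr ε‖ + ‖cr ε‖ :=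
      norm_add₃_le
    rw [heq, norm_neg] at htri
    have e3 : ‖(((g.ρ ε ^ (N+3))⁻¹ : ℝ) : ℂ)‖ = (g.ρ ε ^ (N+3))⁻¹ := by
      rw [Complex.norm_real, Real.norm_eq_abs, abs_of_pos (by positivity)]
    have e4 : (g.ρ ε ^ (N+3))⁻¹ = (g.ρ ε ^ (N+2))⁻¹ * (g.ρ ε)⁻¹ := by
      rw [pow_succ, mul_inv]
    have h4 : (4:ℝ) ≤ (g.ρ ε)⁻¹ := by
      rw [le_inv_comm₀ (by norm_num) hρ0]
      linarith
    have hge : 2 * (g.ρ ε ^ (N+2))⁻¹ ≤ (g.ρ ε ^ (N+3))⁻¹ := by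
      rw [e4]
      nlinarith [hinv2]
    have hρm : 0 ≤ g.ρ ε ^ m := by positivity
    have h1' : ‖zr ε - (((g.ρ ε ^ (N+3))⁻¹ : ℝ) : ℂ)‖ ≤ g.ρ ε := by
      have := h1
      simpa using this
    have h2' : ‖cr ε‖ ≤ g.ρ ε := by simpa using h2
    rw [e3] at htri
    nlinarith [hinv2, hρ1]
  -- ENNReal manipulation
  have hc : ENNReal.ofReal ((g.ρ ε ^ (N+2))⁻¹)
      ≤ (Filter.limsup (fun n : ℕ => ENNReal.ofReal (‖a'' n ε‖ ^ ((n : ℝ)⁻¹))) Filter.atTop)⁻¹ :=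
    le_trans (ENNReal.ofReal_le_ofReal hzc) h0
  have hlims : Filter.limsup (fun n : ℕ => ENNReal.ofReal (‖a'' n ε‖ ^ ((n : ℝ)⁻¹))) Filter.atTop
      ≤ ENNReal.ofReal (g.ρ ε ^ (N+2)) := by
    have h5 := ENNReal.inv_le_inv.2 hc
    rw [inv_inv] at h5
    refine h5.trans ?_
    rw [← ENNReal.ofReal_inv_of_pos (by positivity : (0:ℝ) < (g.ρ ε ^ (N+2))⁻¹), inv_inv]
  have hlt : ENNReal.ofReal (g.ρ ε ^ (N+2)) < ENNReal.ofReal (g.ρ ε ^ (N+1)) := by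
    rw [ENNReal.ofReal_lt_ofReal_iff (by positivity)]
    calc g.ρ ε ^ (N+2) = g.ρ ε ^ (N+1) * g.ρ ε := by ring
      _ < g.ρ ε ^ (N+1) * 1 := by
          apply mul_lt_mul_of_pos_left _ (by positivity)
          linarith
      _ = g.ρ ε ^ (N+1) := mul_one _
  have heven := Filter.eventually_lt_of_limsup_lt (lt_of_le_of_lt hlims hlt)
  obtain ⟨n₀, hn₀⟩ := Filter.eventually_atTop.mp heven
  refine ⟨max n₀ 1, fun n hn => ?_⟩
  have hn1 : 1 ≤ n := le_trans (le_max_right _ _) hn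
  have hlt2 : ‖a'' n ε‖ ^ ((n:ℝ)⁻¹) < g.ρ ε ^ (N+1) := by
    have := hn₀ n (le_trans (le_max_left _ _) hn)
    exact (ENNReal.ofReal_lt_ofReal_iff_of_nonneg
      (Real.rpow_nonneg (norm_nonneg _) _)).1 this
  have hp : ‖a'' n ε‖ ≤ (g.ρ ε ^ (N+1)) ^ n := by
    have he := Real.rpow_inv_natCast_pow (norm_nonneg (a'' n ε)) (by omega : n ≠ 0)
    calc ‖a'' n ε‖ = (‖a'' n ε‖ ^ ((n:ℝ)⁻¹)) ^ n := he.symm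
      _ ≤ (g.ρ ε ^ (N+1)) ^ n :=
          pow_le_pow_left₀ (Real.rpow_nonneg (norm_nonneg _) _) hlt2.le n
  have h3' := h3 n
  rw [add_zero] at h3'
  have hA : ‖A' n ε‖ ≤ 2 * (g.ρ ε ^ (N+1)) ^ n := by
    have : A' n ε = (A' n ε - a'' n ε) + a'' n ε := by ring
    rw [this]
    have := norm_add_le (A' n ε - a'' n ε) (a'' n ε)
    have he2 : g.ρ ε ^ (n * (N+1)) = (g.ρ ε ^ (N+1)) ^ n := by
      rw [← pow_mul, mul_comm]
    rw [he2] at h3'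
    linarith
  refine hA.trans ?_
  have he3 : (g.ρ ε ^ (N+1)) ^ n = (g.ρ ε ^ N) ^ n * g.ρ ε ^ n := by
    rw [← mul_pow, ← pow_succ]
  rw [he3]
  have hn4 : g.ρ ε ^ n ≤ g.ρ ε ^ 1 := pow_le_pow_of_le_one hρ0.le hρ1 hn1
  rw [pow_one] at hn4
  have hx : (0:ℝ) ≤ (g.ρ ε ^ N) ^ n := by positivity
  have : 2 * ((g.ρ ε ^ N) ^ n * g.ρ ε ^ n) ≤ 2 * ((g.ρ ε ^ N) ^ n * (1/4)) := by
    apply mul_le_mul_of_nonneg_left _ (by norm_num)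
    apply mul_le_mul_of_nonneg_left (hn4.trans hρ4) hx
  linarith [this, hx]

theorem fbound {F : Ct g → Ct g} (M : Rt g)
    (hMb : ∀ z : Ct g, GQ.absLt g (F z) (GQ.zero g ℂ) M) :
    ∃ RB : ℕ, ∀ z : Ct g, EvS fun ε => ‖(Quotient.out (F z)).1 ε‖ ≤ (g.ρ ε ^ RB)⁻¹ := by
  obtain ⟨RM, hRM⟩ := (Quotient.out M).2
  refine ⟨RM + 2, fun z => ?_⟩
  obtain ⟨a, b, u, ha, hb, hu, m, hev⟩ := hMb z
  have n1 : g.Negl fun ε => a.1 ε - (Quotient.out (F z)).1 ε :=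
    isRep_diff_negl ⟨a.2, ha⟩ (isRep_out (F z))
  have n2 : g.Negl b.1 := by
    have := rep_zero_negl (g := g) ⟨b.2, hb⟩
    exact this
  have n3 : g.Negl fun ε => u.1 ε - (Quotient.out M).1 ε :=
    isRep_diff_negl ⟨u.2, hu⟩ (isRep_out M)
  refine (((((hev.and (n1 1)).and (n2 1)).and (n3 1)).and hRM).and
    (evs_rho g (by norm_num : (0:ℝ) < 1/2))).mono fun ε hε hε1 hh => ?_
  obtain ⟨⟨⟨⟨⟨h0, h1⟩, h2⟩, h3⟩, h4⟩, hρ0, hρ1, hρ2⟩ := hh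
  have hρm : 0 ≤ g.ρ ε ^ m := by positivity
  have hM1 : ‖(Quotient.out M).1 ε‖ ≤ (g.ρ ε ^ RM)⁻¹ := by
    have : g.ρ ε ^ (-(RM:ℤ)) = (g.ρ ε ^ RM)⁻¹ := by rw [zpow_neg, zpow_natCast]
    rwa [this] at h4
  have hu1 : u.1 ε ≤ (g.ρ ε ^ RM)⁻¹ + g.ρ ε := by
    have h3' : |u.1 ε - (Quotient.out M).1 ε| ≤ g.ρ ε ^ 1 := by
      simpa [Real.norm_eq_abs] using h3
    have := (abs_le.mp h3').2
    have hM2 : (Quotient.out M).1 ε ≤ (g.ρ ε ^ RM)⁻¹ :=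
      le_trans (le_abs_self _) ((Real.norm_eq_abs _).symm ▸ hM1)
    rw [pow_one] at this
    linarith
  have hFz : ‖(Quotient.out (F z)).1 ε‖
      ≤ ‖a.1 ε - b.1 ε‖ + ‖b.1 ε‖ + ‖a.1 ε - (Quotient.out (F z)).1 ε‖ := by
    have heq : (a.1 ε - b.1 ε) + b.1 ε + -(a.1 ε - (Quotient.out (F z)).1 ε)
        = (Quotient.out (F z)).1 ε := by ring
    have htri : ‖(a.1 ε - b.1 ε) + b.1 ε + -(a.1 ε - (Quotient.out (F z)).1 ε)‖
        ≤ ‖a.1 ε - b.1 ε‖ + ‖b.1 ε‖ + ‖-(a.1 ε - (Quotient.out (F z)).1 ε)‖ :=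
      norm_add₃_le
    rw [heq, norm_neg] at htri
    exact htri
  have hab : ‖a.1 ε - b.1 ε‖ ≤ u.1 ε := by linarith
  have hstep : ‖(Quotient.out (F z)).1 ε‖ ≤ (g.ρ ε ^ RM)⁻¹ + 3 * g.ρ ε := by
    rw [pow_one] at h1 h2
    linarith
  refine hstep.trans ?_
  have hinv1 : (1:ℝ) ≤ (g.ρ ε ^ RM)⁻¹ := by
    rw [le_inv_comm₀ one_pos (by positivity)]
    simpa using pow_le_one₀ hρ0.le hρ1
  have he : (g.ρ ε ^ (RM+2))⁻¹ = (g.ρ ε ^ RM)⁻¹ * ((g.ρ ε)⁻¹ * (g.ρ ε)⁻¹) := by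
    rw [pow_succ, pow_succ, mul_inv, mul_inv]
    ring
  have h4' : (2:ℝ) ≤ (g.ρ ε)⁻¹ := by
    rw [le_inv_comm₀ (by norm_num) hρ0]
    linarith
  rw [he]
  have h44 : (4:ℝ) ≤ (g.ρ ε)⁻¹ * (g.ρ ε)⁻¹ := by nlinarith
  have hmul : (g.ρ ε ^ RM)⁻¹ * 4 ≤ (g.ρ ε ^ RM)⁻¹ * ((g.ρ ε)⁻¹ * (g.ρ ε)⁻¹) :=
    mul_le_mul_of_nonneg_left h44 (by positivity)
  nlinarith [hinv1, hρ1, hρ0.le]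

end Liouv


open Filter

noncomputable section

namespace Liouv

theorem inv_pow_ge_one {ρε : ℝ} (h0 : 0 < ρε) (h1 : ρε ≤ 1) (k : ℕ) : (1:ℝ) ≤ (ρε ^ k)⁻¹ := by
  rw [le_inv_comm₀ one_pos (by positivity)]
  simpa using pow_le_one₀ h0.le h1

theorem term_collapse {ρε : ℝ} (h0 : 0 < ρε) (k : ℕ) : ρε ^ (k+1) * (ρε ^ k)⁻¹ = ρε := by
  rw [pow_succ, mul_comm (ρε ^ k) ρε, mul_assoc, mul_inv_cancel₀ (by positivity), mul_one]

theorem inv_pow_succ_ge {ρε : ℝ} (h0 : 0 < ρε) (h4 : ρε ≤ 1/4) (k : ℕ) :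
    4 * (ρε ^ k)⁻¹ ≤ (ρε ^ (k+1))⁻¹ := by
  have he : (ρε ^ (k+1))⁻¹ = (ρε ^ k)⁻¹ * ρε⁻¹ := by rw [pow_succ, mul_inv]
  rw [he]
  have h4' : (4:ℝ) ≤ ρε⁻¹ := by
    rw [le_inv_comm₀ (by norm_num) h0]
    linarith
  have : (ρε ^ k)⁻¹ * 4 ≤ (ρε ^ k)⁻¹ * ρε⁻¹ :=
    mul_le_mul_of_nonneg_left h4' (by positivity)
  linarith

theorem pow_collapse {ρε : ℝ} (h0 : 0 < ρε) (k n : ℕ) :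
    ρε ^ (n * (k+1)) * ((ρε ^ k)⁻¹) ^ n = ρε ^ n := by
  rw [mul_comm n (k+1), pow_mul, ← mul_pow, term_collapse h0]

theorem norm_le_add_sub (x y : ℂ) : ‖x‖ ≤ ‖y‖ + ‖x - y‖ := by
  have := norm_add_le y (x - y)
  simpa using this

variable {g : Gauge}

theorem coeffBound4 (A' : ℕ → ℝ → ℂ) (hW : g.WMod A') (F : Ct g → Ct g)
    (hcs : convSet g A' (GQ.zero g ℂ) = Set.univ)
    (hF : ∀ z : Ct g, ∀ zr : ℝ → ℂ, IsRep g zr z →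
      ∃ hS : g.SMod fun n ε => A' n ε * zr ε ^ n,
        HSConv g (fun n ε => A' n ε * zr ε ^ n) hS (F z))
    (RB : ℕ) (hFb : ∀ z : Ct g, EvS fun ε => ‖(Quotient.out (F z)).1 ε‖ ≤ (g.ρ ε ^ RB)⁻¹)
    (N : ℕ) :
    EvS fun ε => ∀ n : ℕ, ‖A' n ε‖ ≤ (g.ρ ε ^ (RB + 2))⁻¹ * (g.ρ ε ^ N) ^ n := by
  classical
  -- Step 0 : summability at radius (ρ^{N+2})⁻¹
  have hsuEv : EvS fun ε => Summable fun n => ‖A' n ε‖ * ((g.ρ ε ^ (N+2))⁻¹) ^ n := by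
    refine ((radfact A' hcs (N+3)).and (evs_rho g (by norm_num : (0:ℝ) < 1/4))).mono
      fun ε hε hε1 hh => ?_
    obtain ⟨⟨n₀, hn₀⟩, hρ0, hρ1, hρ4⟩ := hh
    apply summable_of_eventually_le_geom
      (fun n => mul_nonneg (norm_nonneg _) (by positivity)) hρ0.le
      (by linarith : g.ρ ε < 1) (n₀ := n₀)
    intro n hn
    calc ‖A' n ε‖ * ((g.ρ ε ^ (N+2))⁻¹) ^ n
        ≤ (g.ρ ε ^ (N+3)) ^ n * ((g.ρ ε ^ (N+2))⁻¹) ^ n := by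
          apply mul_le_mul_of_nonneg_right (hn₀ n hn) (by positivity)
      _ = g.ρ ε ^ n := by
          rw [← mul_pow, term_collapse hρ0]
  set P1 : ℝ → Prop := fun ε =>
    (Summable fun n => ‖A' n ε‖ * ((g.ρ ε ^ (N+2))⁻¹) ^ n) ∧ 0 < g.ρ ε ∧ g.ρ ε ≤ 1/4
    with hP1def
  have hP1Ev : EvS P1 := by
    refine (hsuEv.and (evs_rho g (by norm_num : (0:ℝ) < 1/4))).mono fun ε hε hε1 hh => ?_
    exact ⟨hh.1, hh.2.1, hh.2.2.2⟩
  -- the argmax point on the sphere of radius (ρ^N)⁻¹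
  set tnet : ℝ → ℂ := fun ε =>
    if h : P1 ε then (sphere_max (fun n => A' n ε) (g.ρ ε) N h.2.1 h.2.2 h.1).choose else 0
    with htnet
  have htspec : ∀ ε, P1 ε → ‖tnet ε‖ = (g.ρ ε ^ N)⁻¹ ∧ ∀ w : ℂ, ‖w‖ = (g.ρ ε ^ N)⁻¹ →
      ‖∑' n, A' n ε * w ^ n‖ ≤ ‖∑' n, A' n ε * tnet ε ^ n‖ := by
    intro ε h
    have he : tnet ε = (sphere_max (fun n => A' n ε) (g.ρ ε) N h.2.1 h.2.2 h.1).choose := by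
      rw [htnet]
      exact dif_pos h
    rw [he]
    exact (sphere_max (fun n => A' n ε) (g.ρ ε) N h.2.1 h.2.2 h.1).choose_spec
  have tmod : g.Mod tnet := by
    refine ⟨N, hP1Ev.mono fun ε hε hε1 h => ?_⟩
    rw [(htspec ε h).1, zpow_neg, zpow_natCast]
  -- the generalized point u
  set u : Ct g := GQ.mk g tnet tmod with hu
  have humem : u ∈ convSet g A' (GQ.zero g ℂ) := by rw [hcs]; trivial
  obtain ⟨_, zr', cr', a''', hrz, hrc, hW3, hSE3, hCC⟩ := humem
  set v : ℝ → ℂ := fun ε => zr' ε - cr' ε with hv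
  have hvmod : g.Mod v := hrz.1.sub hrc.1
  have hcrnegl : g.Negl cr' := rep_zero_negl hrc
  have hvrep : IsRep g v u := by
    refine ⟨hvmod, ?_⟩
    apply eq_of_reps (isRep_mk hvmod) hrz
    have heq : (fun ε => v ε - zr' ε) = fun ε => -(cr' ε) := by
      funext ε
      rw [hv]
      ring
    rw [heq]
    exact hcrnegl.neg
  obtain ⟨hS3, hsummev, ⟨hm3, hHL3⟩, hiv⟩ := hCC
  obtain ⟨hS4, hHL4⟩ := hF u v hvrep
  have hvt : g.Negl fun ε => v ε - tnet ε := isRep_diff_negl hvrep (isRep_mk tmod)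
  have hvb : EvS fun ε => ‖v ε‖ ≤ (g.ρ ε ^ N)⁻¹ + 1 := by
    refine ((hvt 0).and hP1Ev).mono fun ε hε hε1 hh => ?_
    obtain ⟨h1, h2⟩ := hh
    have h3 := (htspec ε h2).1
    have h1' : ‖v ε - tnet ε‖ ≤ 1 := by simpa using h1
    calc ‖v ε‖ ≤ ‖tnet ε‖ + ‖v ε - tnet ε‖ := norm_le_add_sub _ _
      _ ≤ (g.ρ ε ^ N)⁻¹ + 1 := by rw [h3]; linarith
  -- step 5 : transfer of the hyperlimit
  have hcomp : ∀ q : ℕ, EvS fun ε => ∀ K : ℕ,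
      ‖∑ n ∈ Finset.range (K+1),
        (A' n ε * v ε ^ n - PSeriesNet a''' zr' cr' n ε)‖ ≤ g.ρ ε ^ q := by
    intro q
    refine (((hSE3 (N+2) (q+2)).and hvb).and (hP1Ev)).mono fun ε hε hε1 hh => ?_
    obtain ⟨⟨h1, h2⟩, hP⟩ := hh
    obtain ⟨hsu, hρ0, hρ4⟩ := hP
    obtain ⟨hr0, hr1, hr12⟩ := radii_facts (fun n => A' n ε) (g.ρ ε) N hρ0 hρ4 hsu
    intro K
    have hterm : ∀ n : ℕ, ‖A' n ε * v ε ^ n - PSeriesNet a''' zr' cr' n ε‖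
        ≤ g.ρ ε ^ (q+2) * g.ρ ε ^ n := by
      intro n
      have he : A' n ε * v ε ^ n - PSeriesNet a''' zr' cr' n ε
          = (A' n ε - a''' n ε) * v ε ^ n := by
        rw [PSeriesNet, hv]
        ring
      rw [he, norm_mul, norm_pow]
      calc ‖A' n ε - a''' n ε‖ * ‖v ε‖ ^ n
          ≤ g.ρ ε ^ (n * (N+2) + (q+2)) * ((g.ρ ε ^ (N+1))⁻¹) ^ n := by
            apply mul_le_mul (h1 n) (pow_le_pow_left₀ (norm_nonneg _) (by linarith) n)
              (by positivity) (by positivity)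
        _ = (g.ρ ε ^ (n*(N+2)) * ((g.ρ ε ^ (N+1))⁻¹) ^ n) * g.ρ ε ^ (q+2) := by
            rw [pow_add]
            ring
        _ = g.ρ ε ^ n * g.ρ ε ^ (q+2) := by rw [pow_collapse hρ0 (N+1) n]
        _ = g.ρ ε ^ (q+2) * g.ρ ε ^ n := by ring
    calc ‖∑ n ∈ Finset.range (K+1), (A' n ε * v ε ^ n - PSeriesNet a''' zr' cr' n ε)‖
        ≤ ∑ n ∈ Finset.range (K+1), ‖A' n ε * v ε ^ n - PSeriesNet a''' zr' cr' n ε‖ :=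
          norm_sum_le _ _
      _ ≤ ∑ n ∈ Finset.range (K+1), g.ρ ε ^ (q+2) * g.ρ ε ^ n :=
          Finset.sum_le_sum fun n _ => hterm n
      _ = g.ρ ε ^ (q+2) * ∑ n ∈ Finset.range (K+1), g.ρ ε ^ n := by rw [Finset.mul_sum]
      _ ≤ g.ρ ε ^ (q+2) * 2 := by
          apply mul_le_mul_of_nonneg_left (sum_range_pow_le hρ0.le (by linarith) _)
            (by positivity)
      _ ≤ g.ρ ε ^ q := by
          have he2 : g.ρ ε ^ (q+2) = g.ρ ε ^ q * (g.ρ ε * g.ρ ε) := by ring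
          rw [he2]
          have hq0 : (0:ℝ) ≤ g.ρ ε ^ q := by positivity
          have h8 : g.ρ ε * g.ρ ε * 2 ≤ 1 := by nlinarith
          calc g.ρ ε ^ q * (g.ρ ε * g.ρ ε) * 2 = g.ρ ε ^ q * (g.ρ ε * g.ρ ε * 2) := by ring
            _ ≤ g.ρ ε ^ q * 1 := mul_le_mul_of_nonneg_left h8 hq0
            _ = g.ρ ε ^ q := mul_one _
  have hHL4' : HyperLim g (partialSum g (PSeriesNet a''' zr' cr') hS3) (F u) :=
    hyperLim_transfer hS4 hS3 hcomp hHL4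
  have Fu_eq : F u = GQ.mk g (fun ε => ∑' n, PSeriesNet a''' zr' cr' n ε) hm3 :=
    hyperLim_unique hHL4' hHL3
  -- step 7 : bound for the full sum of a''' at v
  have hsup3 : EvS fun ε => ‖∑' n, PSeriesNet a''' zr' cr' n ε‖ ≤ (g.ρ ε ^ RB)⁻¹ + 1 := by
    have n4 : g.Negl fun ε => (∑' n, PSeriesNet a''' zr' cr' n ε) - (Quotient.out (F u)).1 ε :=
      isRep_diff_negl ⟨hm3, Fu_eq.symm⟩ (isRep_out (F u))
    refine (((hFb u).and (n4 0)).and (evs_rho g one_pos)).mono fun ε hε hε1 hh => ?_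
    obtain ⟨⟨h1, h2⟩, hρ0, hρ1, _⟩ := hh
    have h2' : ‖(∑' n, PSeriesNet a''' zr' cr' n ε) - (Quotient.out (F u)).1 ε‖ ≤ 1 := by
      simpa using h2
    calc ‖∑' n, PSeriesNet a''' zr' cr' n ε‖
        ≤ ‖(Quotient.out (F u)).1 ε‖ + ‖(∑' n, PSeriesNet a''' zr' cr' n ε)
            - (Quotient.out (F u)).1 ε‖ := norm_le_add_sub _ _
      _ ≤ (g.ρ ε ^ RB)⁻¹ + 1 := add_le_add h1 h2'
  -- step 8 : full-sum comparison at v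
  have hAv : EvS fun ε => ‖(∑' n, A' n ε * v ε ^ n) - ∑' n, PSeriesNet a''' zr' cr' n ε‖ ≤ 1 := by
    refine (((hsummev.and (hSE3 (N+2) 2)).and hvb).and hP1Ev).mono fun ε hε hε1 hh => ?_
    obtain ⟨⟨⟨hsm, h1⟩, h2⟩, hsu, hρ0, hρ4⟩ := hh
    obtain ⟨hr0, hr1, hr12⟩ := radii_facts (fun n => A' n ε) (g.ρ ε) N hρ0 hρ4 hsu
    have hvn : ‖v ε‖ ≤ (g.ρ ε ^ (N+1))⁻¹ := by linarith
    have hxsum : Summable fun n => A' n ε * v ε ^ n := by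
      apply Summable.of_norm
      apply Summable.of_nonneg_of_le (fun n => norm_nonneg _) _ hsu
      intro n
      rw [norm_mul, norm_pow]
      apply mul_le_mul_of_nonneg_left _ (norm_nonneg _)
      apply pow_le_pow_left₀ (norm_nonneg _)
      linarith
    have hterm : ∀ n : ℕ, ‖A' n ε * v ε ^ n - PSeriesNet a''' zr' cr' n ε‖
        ≤ (g.ρ ε * g.ρ ε) * g.ρ ε ^ n := by
      intro n
      have he : A' n ε * v ε ^ n - PSeriesNet a''' zr' cr' n ε
          = (A' n ε - a''' n ε) * v ε ^ n := by
        rw [PSeriesNet, hv]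
        ring
      rw [he, norm_mul, norm_pow]
      calc ‖A' n ε - a''' n ε‖ * ‖v ε‖ ^ n
          ≤ g.ρ ε ^ (n * (N+2) + 2) * ((g.ρ ε ^ (N+1))⁻¹) ^ n := by
            apply mul_le_mul (h1 n) (pow_le_pow_left₀ (norm_nonneg _) hvn n)
              (by positivity) (by positivity)
        _ = (g.ρ ε ^ (n*(N+2)) * ((g.ρ ε ^ (N+1))⁻¹) ^ n) * g.ρ ε ^ 2 := by
            rw [pow_add]
            ring
        _ = g.ρ ε ^ n * g.ρ ε ^ 2 := by rw [pow_collapse hρ0 (N+1) n]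
        _ = (g.ρ ε * g.ρ ε) * g.ρ ε ^ n := by ring
    have hbsum : Summable fun n => (g.ρ ε * g.ρ ε) * g.ρ ε ^ n :=
      (summable_geometric_of_lt_one hρ0.le (by linarith)).mul_left _
    have := tsum_diff_bound hxsum hsm hbsum hterm
    refine this.trans ?_
    rw [tsum_mul_left]
    have h2' : ∑' n : ℕ, g.ρ ε ^ n ≤ 2 := tsum_pow_le hρ0.le (by linarith)
    nlinarith
  -- step 9
  have hhv : EvS fun ε => ‖∑' n, A' n ε * v ε ^ n‖ ≤ (g.ρ ε ^ RB)⁻¹ + 2 := by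
    refine (hsup3.and hAv).mono fun ε hε hε1 hh => ?_
    obtain ⟨h1, h2⟩ := hh
    calc ‖∑' n, A' n ε * v ε ^ n‖
        ≤ ‖∑' n, PSeriesNet a''' zr' cr' n ε‖ + ‖(∑' n, A' n ε * v ε ^ n)
            - ∑' n, PSeriesNet a''' zr' cr' n ε‖ := norm_le_add_sub _ _
      _ ≤ ((g.ρ ε ^ RB)⁻¹ + 1) + 1 := add_le_add h1 h2
      _ = (g.ρ ε ^ RB)⁻¹ + 2 := by ring
  -- step 10 : the argmax point on the segment [tnet, v]
  set P2 : ℝ → Prop := fun ε => P1 ε ∧ ‖tnet ε‖ = (g.ρ ε ^ N)⁻¹ ∧ ‖v ε‖ ≤ (g.ρ ε ^ N)⁻¹ + 1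
    with hP2def
  have hP2Ev : EvS P2 := by
    refine (hP1Ev.and hvb).mono fun ε hε hε1 hh => ?_
    exact ⟨hh.1, (htspec ε hh.1).1, hh.2⟩
  set τnet : ℝ → ℂ := fun ε =>
    if h : P2 ε then (seg_max (fun n => A' n ε) (g.ρ ε) N h.1.2.1 h.1.2.2 h.1.1 (tnet ε) (v ε)
      (le_of_eq h.2.1) h.2.2).choose else 0 with hτnet
  have hτspec : ∀ ε, P2 ε → ‖τnet ε - tnet ε‖ ≤ ‖v ε - tnet ε‖ ∧
      ‖(∑' n, A' n ε * (v ε) ^ n) - ∑' n, A' n ε * (tnet ε) ^ n‖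
        ≤ ‖∑' n, A' n ε * ((n:ℂ) * (τnet ε) ^ (n-1))‖ * ‖v ε - tnet ε‖ := by
    intro ε h
    have he : τnet ε = (seg_max (fun n => A' n ε) (g.ρ ε) N h.1.2.1 h.1.2.2 h.1.1 (tnet ε) (v ε)
        (le_of_eq h.2.1) h.2.2).choose := by
      rw [hτnet]
      exact dif_pos h
    rw [he]
    exact (seg_max (fun n => A' n ε) (g.ρ ε) N h.1.2.1 h.1.2.2 h.1.1 (tnet ε) (v ε)
      (le_of_eq h.2.1) h.2.2).choose_spec
  have hτt : g.Negl fun ε => τnet ε - tnet ε := by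
    intro q
    refine ((hvt q).and hP2Ev).mono fun ε hε hε1 hh => ?_
    exact le_trans (hτspec ε hh.2).1 hh.1
  have τmod : g.Mod τnet := by
    refine ⟨N+1, ((hτt 0).and hP2Ev).mono fun ε hε hε1 hh => ?_⟩
    obtain ⟨h1, h2⟩ := hh
    obtain ⟨hsu, hρ0, hρ4⟩ := h2.1
    obtain ⟨hr0, hr1, _⟩ := radii_facts (fun n => A' n ε) (g.ρ ε) N hρ0 hρ4 hsu
    rw [zpow_neg, zpow_natCast]
    have h1' : ‖τnet ε - tnet ε‖ ≤ 1 := by simpa using h1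
    calc ‖τnet ε‖ ≤ ‖tnet ε‖ + ‖τnet ε - tnet ε‖ := norm_le_add_sub _ _
      _ ≤ (g.ρ ε ^ N)⁻¹ + 1 := by rw [h2.2.1]; linarith
      _ ≤ (g.ρ ε ^ (N+1))⁻¹ := hr1.le
  have hrep2 : IsRep g (fun ε => τnet ε + cr' ε) u := by
    refine ⟨τmod.add hrc.1, ?_⟩
    apply eq_of_reps (isRep_mk (τmod.add hrc.1)) hrz
    have heq : (fun ε => (τnet ε + cr' ε) - zr' ε)
        = fun ε => (τnet ε - tnet ε) - (v ε - tnet ε) := by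
      funext ε
      rw [hv]
      ring
    rw [heq]
    exact hτt.sub hvt
  obtain ⟨hsd, hmodd⟩ := hiv (fun ε => τnet ε + cr' ε) hrep2
  simp only [add_sub_cancel_right] at hsd hmodd
  obtain ⟨S4, hS4ev⟩ := hmodd
  -- step 11 : bound on the derivative sum at τnet
  have hDτ : EvS fun ε => ‖∑' n, A' n ε * ((n:ℂ) * (τnet ε) ^ (n-1))‖
      ≤ (g.ρ ε ^ (S4+1))⁻¹ := by
    refine ((((hsd.and hS4ev).and (hSE3 (N+2) 1)).and hP2Ev).and (hτt 0)).mono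
      fun ε hε hε1 hh => ?_
    obtain ⟨⟨⟨⟨hsm, h4⟩, h1⟩, hP2⟩, hτ1⟩ := hh
    obtain ⟨hsu, hρ0, hρ4⟩ := hP2.1
    obtain ⟨hr0, hr1, hr12⟩ := radii_facts (fun n => A' n ε) (g.ρ ε) N hρ0 hρ4 hsu
    have hτ1' : ‖τnet ε - tnet ε‖ ≤ 1 := by simpa using hτ1
    have hτn : ‖τnet ε‖ < (g.ρ ε ^ (N+1))⁻¹ := by
      calc ‖τnet ε‖ ≤ ‖tnet ε‖ + ‖τnet ε - tnet ε‖ := norm_le_add_sub _ _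
        _ ≤ (g.ρ ε ^ N)⁻¹ + 1 := by rw [hP2.2.1]; linarith
        _ < (g.ρ ε ^ (N+1))⁻¹ := hr1
    obtain ⟨_, _, _, hP4⟩ := pkg (fun n => A' n ε) ((g.ρ ε ^ (N+1))⁻¹) ((g.ρ ε ^ (N+2))⁻¹)
      (by positivity) hr12 hsu
    have hxsum : Summable fun n => A' n ε * ((n:ℂ) * (τnet ε) ^ (n-1)) :=
      (hP4 (τnet ε) hτn).of_norm
    have hterm : ∀ n : ℕ, ‖A' n ε * ((n:ℂ) * (τnet ε) ^ (n-1))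
        - (n:ℂ) * a''' n ε * (τnet ε) ^ (n-1)‖ ≤ g.ρ ε * ((n:ℝ) * g.ρ ε ^ n) := by
      intro n
      have he : A' n ε * ((n:ℂ) * (τnet ε) ^ (n-1)) - (n:ℂ) * a''' n ε * (τnet ε) ^ (n-1)
          = (n:ℂ) * ((A' n ε - a''' n ε) * (τnet ε) ^ (n-1)) := by ring
      rw [he, norm_mul, norm_mul, Complex.norm_natCast, norm_pow]
      rcases Nat.eq_zero_or_pos n with rfl | hn
      · simp
      · have h1n := h1 n
        have hτle : ‖τnet ε‖ ^ (n-1) ≤ ((g.ρ ε ^ (N+1))⁻¹) ^ (n-1) :=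
          pow_le_pow_left₀ (norm_nonneg _) hτn.le _
        have hx1 : ((g.ρ ε ^ (N+1))⁻¹) ^ (n-1)
            = ((g.ρ ε ^ (N+1))⁻¹) ^ n * g.ρ ε ^ (N+1) := by
          have hn1 : n - 1 + 1 = n := by omega
          calc ((g.ρ ε ^ (N+1))⁻¹) ^ (n-1)
              = ((g.ρ ε ^ (N+1))⁻¹) ^ (n-1) * (((g.ρ ε ^ (N+1))⁻¹) * g.ρ ε ^ (N+1)) := by
                rw [inv_mul_cancel₀ (by positivity), mul_one]
            _ = ((g.ρ ε ^ (N+1))⁻¹) ^ n * g.ρ ε ^ (N+1) := by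
                rw [← mul_assoc, ← pow_succ, hn1]
        have hc := pow_collapse hρ0 (N+1) n
        calc (n:ℝ) * (‖A' n ε - a''' n ε‖ * ‖τnet ε‖ ^ (n-1))
            ≤ (n:ℝ) * (g.ρ ε ^ (n*(N+2)+1) * (((g.ρ ε ^ (N+1))⁻¹) ^ n * g.ρ ε ^ (N+1))) := by
              rw [← hx1]
              exact mul_le_mul_of_nonneg_left
                (mul_le_mul h1n hτle (by positivity) (by positivity)) (Nat.cast_nonneg n)
          _ = (n:ℝ) * (g.ρ ε ^ n * g.ρ ε * g.ρ ε ^ (N+1)) := by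
              rw [pow_add, pow_one]
              linear_combination ((n:ℝ) * g.ρ ε * g.ρ ε ^ (N+1)) * hc
          _ ≤ g.ρ ε * ((n:ℝ) * g.ρ ε ^ n) := by
              have hle1 : g.ρ ε ^ (N+1) ≤ 1 := pow_le_one₀ hρ0.le (by linarith)
              have hnn : (0:ℝ) ≤ (n:ℝ) * (g.ρ ε ^ n * g.ρ ε) := by positivity
              calc (n:ℝ) * (g.ρ ε ^ n * g.ρ ε * g.ρ ε ^ (N+1))
                  = ((n:ℝ) * (g.ρ ε ^ n * g.ρ ε)) * g.ρ ε ^ (N+1) := by ring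
                _ ≤ ((n:ℝ) * (g.ρ ε ^ n * g.ρ ε)) * 1 :=
                    mul_le_mul_of_nonneg_left hle1 hnn
                _ = g.ρ ε * ((n:ℝ) * g.ρ ε ^ n) := by ring
    have hbsum : Summable fun n : ℕ => g.ρ ε * ((n:ℝ) * g.ρ ε ^ n) := by
      have hnorm : ‖g.ρ ε‖ < 1 := by
        rw [Real.norm_eq_abs, abs_of_pos hρ0]
        linarith
      have := (summable_pow_mul_geometric_of_norm_lt_one (R := ℝ) 1 hnorm).mul_left (g.ρ ε)
      simpa [pow_one] using this
    have hdiff := tsum_diff_bound hxsum hsm hbsum hterm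
    have htb : ∑' n : ℕ, g.ρ ε * ((n:ℝ) * g.ρ ε ^ n) ≤ 2 * g.ρ ε := by
      rw [tsum_mul_left]
      have := tsum_nat_mul_pow_le hρ0.le (by linarith : g.ρ ε ≤ 1/2)
      nlinarith
    have h4' : ‖∑' n : ℕ, (n:ℂ) * a''' n ε * (τnet ε) ^ (n-1)‖ ≤ (g.ρ ε ^ S4)⁻¹ := by
      have hzp : g.ρ ε ^ (-(S4:ℤ)) = (g.ρ ε ^ S4)⁻¹ := by rw [zpow_neg, zpow_natCast]
      rwa [hzp] at h4
    have hfin : ‖∑' n, A' n ε * ((n:ℂ) * (τnet ε) ^ (n-1))‖ ≤ (g.ρ ε ^ S4)⁻¹ + 2 * g.ρ ε := by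
      calc ‖∑' n, A' n ε * ((n:ℂ) * (τnet ε) ^ (n-1))‖
          ≤ ‖∑' n : ℕ, (n:ℂ) * a''' n ε * (τnet ε) ^ (n-1)‖
            + ‖(∑' n, A' n ε * ((n:ℂ) * (τnet ε) ^ (n-1)))
              - ∑' n : ℕ, (n:ℂ) * a''' n ε * (τnet ε) ^ (n-1)‖ := norm_le_add_sub _ _
        _ ≤ (g.ρ ε ^ S4)⁻¹ + 2 * g.ρ ε := add_le_add h4' (hdiff.trans htb)
    refine hfin.trans ?_
    have hg1 : (1:ℝ) ≤ (g.ρ ε ^ S4)⁻¹ := inv_pow_ge_one hρ0 (by linarith) S4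
    have hg2 := inv_pow_succ_ge hρ0 hρ4 S4
    linarith
  -- step 12 : the sup bound on the sphere
  have hsupEv : EvS fun ε => ∀ w : ℂ, ‖w‖ = (g.ρ ε ^ N)⁻¹ →
      ‖∑' n, A' n ε * w ^ n‖ ≤ (g.ρ ε ^ (RB + 2))⁻¹ := by
    refine (((hhv.and hDτ).and (hvt (S4+2))).and hP2Ev).mono fun ε hε hε1 hh => ?_
    obtain ⟨⟨⟨h9, hD⟩, hδ⟩, hP2⟩ := hh
    obtain ⟨hsu, hρ0, hρ4⟩ := hP2.1
    have hδ' : ‖v ε - tnet ε‖ ≤ g.ρ ε ^ (S4+2) := by simpa using hδ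
    have hτsp := hτspec ε hP2
    have hst : ‖∑' n, A' n ε * (tnet ε) ^ n‖ ≤ (g.ρ ε ^ RB)⁻¹ + 3 := by
      have hmvt : ‖(∑' n, A' n ε * (tnet ε) ^ n) - ∑' n, A' n ε * (v ε) ^ n‖
          ≤ (g.ρ ε ^ (S4+1))⁻¹ * g.ρ ε ^ (S4+2) := by
        rw [norm_sub_rev]
        refine hτsp.2.trans ?_
        apply mul_le_mul hD hδ' (norm_nonneg _) (by positivity)
      have hcoll : (g.ρ ε ^ (S4+1))⁻¹ * g.ρ ε ^ (S4+2) = g.ρ ε := by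
        rw [mul_comm]
        exact term_collapse hρ0 (S4+1)
      rw [hcoll] at hmvt
      calc ‖∑' n, A' n ε * (tnet ε) ^ n‖
          ≤ ‖∑' n, A' n ε * (v ε) ^ n‖
            + ‖(∑' n, A' n ε * (tnet ε) ^ n) - ∑' n, A' n ε * (v ε) ^ n‖ :=
            norm_le_add_sub _ _
        _ ≤ ((g.ρ ε ^ RB)⁻¹ + 2) + g.ρ ε := add_le_add h9 hmvt
        _ ≤ (g.ρ ε ^ RB)⁻¹ + 3 := by linarith
    intro w hw
    have hmax := (htspec ε hP2.1).2 w hw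
    refine (hmax.trans hst).trans ?_
    have hg1 : (1:ℝ) ≤ (g.ρ ε ^ RB)⁻¹ := inv_pow_ge_one hρ0 (by linarith) RB
    have hg2 := inv_pow_succ_ge hρ0 hρ4 RB
    have hg3 := inv_pow_succ_ge hρ0 hρ4 (RB+1)
    have hg4 : (1:ℝ) ≤ (g.ρ ε ^ (RB+1))⁻¹ := inv_pow_ge_one hρ0 (by linarith) (RB+1)
    linarith
  -- step 13 : conclusion via the Cauchy coefficient estimate
  refine (hsupEv.and hP1Ev).mono fun ε hε hε1 hh => ?_
  obtain ⟨hsup, hP⟩ := hh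
  obtain ⟨hsu, hρ0, hρ4⟩ := hP
  obtain ⟨hr0, hr1, hr12⟩ := radii_facts (fun n => A' n ε) (g.ρ ε) N hρ0 hρ4 hsu
  have hsum' : Summable fun n => ‖A' n ε‖ * ((g.ρ ε ^ N)⁻¹) ^ n := by
    apply Summable.of_nonneg_of_le (fun n => by positivity) _ hsu
    intro n
    apply mul_le_mul_of_nonneg_left _ (norm_nonneg _)
    apply pow_le_pow_left₀ (by positivity)
    linarith
  have hcb := coeff_bound (fun n => A' n ε) ((g.ρ ε ^ N)⁻¹) ((g.ρ ε ^ (RB+2))⁻¹) hr0 hsum' hsup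
  intro n
  have h1 := hcb n
  have h2 : ((g.ρ ε ^ N)⁻¹) ^ n * (g.ρ ε ^ N) ^ n = 1 := by
    rw [← mul_pow, inv_mul_cancel₀ (by positivity), one_pow]
  calc ‖A' n ε‖ = ‖A' n ε‖ * ((g.ρ ε ^ N)⁻¹) ^ n * (g.ρ ε ^ N) ^ n := by
        rw [mul_assoc, h2, mul_one]
    _ ≤ (g.ρ ε ^ (RB+2))⁻¹ * (g.ρ ε ^ N) ^ n :=
        mul_le_mul_of_nonneg_right h1 (by positivity)

end Liouv


open Filter

noncomputable section

namespace Liouv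

theorem liouville_main (g : Gauge) (A' : ℕ → ℝ → ℂ) (hW : g.WMod A') (F : Ct g → Ct g)
    (hcs : convSet g A' (GQ.zero g ℂ) = Set.univ)
    (hF : ∀ z : Ct g, ∀ zr : ℝ → ℂ, IsRep g zr z →
      ∃ hS : g.SMod fun n ε => A' n ε * zr ε ^ n,
        HSConv g (fun n ε => A' n ε * zr ε ^ n) hS (F z))
    (hM : ∃ M : Rt g, ∀ z : Ct g, GQ.absLt g (F z) (GQ.zero g ℂ) M) :
    ∀ z w : Ct g, F z = F w := by
  obtain ⟨M, hMb⟩ := hM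
  obtain ⟨RB, hFb⟩ := fbound M hMb
  have h0m : g.Mod fun ε => A' 0 ε := by
    obtain ⟨Q, R, hQR⟩ := hW
    refine ⟨R, hQR.mono fun ε hε hε1 h => ?_⟩
    have := h 0
    simpa using this
  suffices hkey : ∀ z : Ct g, F z = GQ.mk g (fun ε => A' 0 ε) h0m by
    intro z w
    rw [hkey z, hkey w]
  intro z
  obtain ⟨K, hK⟩ := (Quotient.out z).2
  obtain ⟨hS, hHL⟩ := hF z (Quotient.out z).1 (isRep_out z)
  apply hyperLim_eq_of_close hS hHL h0m
  intro q
  refine (((coeffBound4 A' hW F hcs hF RB hFb (K + RB + 2 + q + 1)).and hK).and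
    (evs_rho g (by norm_num : (0:ℝ) < 1/2))).mono fun ε hε hε1 hh => ?_
  obtain ⟨⟨h1, h2⟩, hρ0, hρ1, hρ2⟩ := hh
  intro d
  have hzk : ‖(Quotient.out z).1 ε‖ ≤ (g.ρ ε ^ K)⁻¹ := by
    have : g.ρ ε ^ (-(K:ℤ)) = (g.ρ ε ^ K)⁻¹ := by rw [zpow_neg, zpow_natCast]
    rwa [this] at h2
  have hterm : ∀ k : ℕ, ‖A' k ε * (Quotient.out z).1 ε ^ k‖
      ≤ (g.ρ ε ^ (RB+2))⁻¹ * (g.ρ ε ^ (RB + 2 + q + 1)) ^ k := by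
    intro k
    rw [norm_mul, norm_pow]
    calc ‖A' k ε‖ * ‖(Quotient.out z).1 ε‖ ^ k
        ≤ ((g.ρ ε ^ (RB+2))⁻¹ * (g.ρ ε ^ (K + RB + 2 + q + 1)) ^ k) * ((g.ρ ε ^ K)⁻¹) ^ k := by
          apply mul_le_mul (h1 k) (pow_le_pow_left₀ (norm_nonneg _) hzk k) (by positivity)
            (by positivity)
      _ = (g.ρ ε ^ (RB+2))⁻¹ * (g.ρ ε ^ (RB + 2 + q + 1)) ^ k := by
          rw [mul_assoc, ← mul_pow]
          congr 2
          rw [show K + RB + 2 + q + 1 = K + (RB + 2 + q + 1) by omega, pow_add,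
            mul_comm (g.ρ ε ^ K) _, mul_assoc, mul_inv_cancel₀ (by positivity), mul_one]
  have hsplit := sum_head_split (fun k => A' k ε * (Quotient.out z).1 ε ^ k) d
  have hI0 : A' 0 ε * (Quotient.out z).1 ε ^ 0 = A' 0 ε := by rw [pow_zero, mul_one]
  rw [hsplit, hI0]
  have heq2 : A' 0 ε + (∑ k ∈ Finset.Icc 1 d, A' k ε * (Quotient.out z).1 ε ^ k) - A' 0 ε
      = ∑ k ∈ Finset.Icc 1 d, A' k ε * (Quotient.out z).1 ε ^ k := by ring
  rw [heq2]
  have hx0 : (0:ℝ) ≤ g.ρ ε ^ (RB+2+q+1) := by positivity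
  have hx2 : g.ρ ε ^ (RB+2+q+1) ≤ 1/2 := by
    calc g.ρ ε ^ (RB+2+q+1) ≤ g.ρ ε ^ 1 := pow_le_pow_of_le_one hρ0.le hρ1 (by omega)
      _ ≤ 1/2 := by rwa [pow_one]
  calc ‖∑ k ∈ Finset.Icc 1 d, A' k ε * (Quotient.out z).1 ε ^ k‖
      ≤ ∑ k ∈ Finset.Icc 1 d, ‖A' k ε * (Quotient.out z).1 ε ^ k‖ := norm_sum_le _ _
    _ ≤ ∑ k ∈ Finset.Icc 1 d, (g.ρ ε ^ (RB+2))⁻¹ * (g.ρ ε ^ (RB+2+q+1)) ^ k :=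
        Finset.sum_le_sum fun k _ => hterm k
    _ = (g.ρ ε ^ (RB+2))⁻¹ * ∑ k ∈ Finset.Icc 1 d, (g.ρ ε ^ (RB+2+q+1)) ^ k := by
        rw [Finset.mul_sum]
    _ ≤ (g.ρ ε ^ (RB+2))⁻¹ * (2 * (g.ρ ε ^ (RB+2+q+1)) ^ 1) := by
        apply mul_le_mul_of_nonneg_left (sum_Icc_pow_le hx0 hx2 1 d) (by positivity)
    _ ≤ g.ρ ε ^ q := by
        rw [pow_one]
        have heq3 : (g.ρ ε ^ (RB+2))⁻¹ * (2 * g.ρ ε ^ (RB+2+q+1)) = 2 * g.ρ ε * g.ρ ε ^ q := by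
          rw [show RB+2+q+1 = (RB+2) + (q + 1) by omega, pow_add]
          have hne : g.ρ ε ^ (RB+2) ≠ 0 := by positivity
          field_simp
          ring
        rw [heq3]
        nlinarith [pow_nonneg hρ0.le q]

end Liouv


/-- Liouville-type theorem: a uniformly bounded net of entire functions has
negligible Taylor coefficients of positive index, its hyper-power series is the constant
[f_ε(0)], and a bounded generalized entire function is constant. -/
theorem stmt15 (g : Gauge) (f : ℝ → ℂ → ℂ) (hent : ∀ ε : ℝ, Differentiable ℂ (f ε))
    (Mr : ℝ → ℝ) (hMmod : g.Mod Mr) (hMpos : Rt.lt g (GQ.zero g ℝ) (GQ.mk g Mr hMmod))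
    (hbound : ∀ N : ℕ, EvS fun ε => ∀ w : ℂ, ‖w‖ ≤ g.ρ ε ^ (-(N : ℤ)) → ‖f ε w‖ ≤ Mr ε)
    (A : ℕ → ℝ → ℂ) (hAdef : A = fun n ε => iteratedDeriv n (f ε) 0 / (n.factorial : ℂ)) :
    (g.WMod A ∧
      (∀ Nr : ℝ → ℕ, g.NMod Nr → (EvS fun ε => 1 ≤ Nr ε) → g.Negl fun ε => A (Nr ε) ε) ∧
      ∀ z ∈ convSet g A (GQ.zero g ℂ), ∀ zr : ℝ → ℂ, IsRep g zr z →
        ∃ hS : g.SMod fun n ε => A n ε * zr ε ^ n, ∃ h0 : g.Mod fun ε => f ε 0,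
          HSConv g (fun n ε => A n ε * zr ε ^ n) hS (GQ.mk g _ h0)) ∧
    ∀ A' : ℕ → ℝ → ℂ, g.WMod A' → ∀ F : Ct g → Ct g,
      convSet g A' (GQ.zero g ℂ) = Set.univ →
      (∀ z : Ct g, ∀ zr : ℝ → ℂ, IsRep g zr z →
        ∃ hS : g.SMod fun n ε => A' n ε * zr ε ^ n,
          HSConv g (fun n ε => A' n ε * zr ε ^ n) hS (F z)) →
      (∃ M : Rt g, ∀ z : Ct g, GQ.absLt g (F z) (GQ.zero g ℂ) M) →
      ∀ z w : Ct g, F z = F w := by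
  refine ⟨⟨Liouv.part1 g f hent Mr hMmod hbound A hAdef,
    fun Nr hNmod hNr1 => Liouv.part2 g f hent Mr hMmod hbound A hAdef Nr hNr1,
    fun z hz zr hzr => Liouv.part3 g f hent Mr hMmod hbound A hAdef hzr⟩,
    fun A' hW F hcs hF hM z w => Liouv.liouville_main g A' hW F hcs hF hM z w⟩
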